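/- arXiv:0705.1485 — 6 statements merged into one kernel-verified Lean document; each statement's English description precedes it below -/
import Mathlib

section
/- In the Artin group A_k of dihedral type (k ≥ 3), every element w can be written as w = w₁⋯wₙ Δʳ for some r ∈ ℤ and w₁,…,wₙ ∈ M⁺, where M⁺ = {prod(a,b;i), prod(b,a;i) : 1 ≤ i ≤ k−1} and Δ = prod(a,b;k). -/
/-- Alternating product `prodd s t n = stst⋯` with `n` factors. -/
def prodd {G : Type*} [Monoid G] : G → G → ℕ → G
  | _, _, 0 => 1
  | s, t, n + 1 => s * prodd t s n

/-- The single relation `prod(a,b;k) = prod(b,a;k)` of the dihedral Artin group. -/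
def ArtinRels (k : ℕ) : Set (FreeGroup Bool) :=
  {prodd (FreeGroup.of true) (FreeGroup.of false) k *
    (prodd (FreeGroup.of false) (FreeGroup.of true) k)⁻¹}

/-- The Artin group of dihedral type `A_k`. -/
abbrev Artin (k : ℕ) : Type := PresentedGroup (ArtinRels k)

def Artin.a (k : ℕ) : Artin k := PresentedGroup.of true
def Artin.b (k : ℕ) : Artin k := PresentedGroup.of false

/-- The Garside element `Δ = prod(a,b;k)`. -/
def Artin.Delta (k : ℕ) : Artin k := prodd (Artin.a k) (Artin.b k) k

/-- The set `M⁺` of proper alternating positive words of length `1,…,k-1`. -/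
def Mplus (k : ℕ) : Set (Artin k) :=
  {w | ∃ i, 1 ≤ i ∧ i ≤ k - 1 ∧
    (w = prodd (Artin.a k) (Artin.b k) i ∨ w = prodd (Artin.b k) (Artin.a k) i)}

/-- The Artin generating set `{a, b, a⁻¹, b⁻¹}`. -/
def artinGens (k : ℕ) : Set (Artin k) :=
  {Artin.a k, Artin.b k, (Artin.a k)⁻¹, (Artin.b k)⁻¹}

/-- Word length of `w` with respect to a generating set `S` (assumed symmetric). -/
noncomputable def wordLength {G : Type*} [Group G] (S : Set G) (w : G) : ℕ :=
  sInf {n | ∃ l : List G, l.length = n ∧ (∀ g ∈ l, g ∈ S) ∧ l.prod = w}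

/-- `x = Δ^r z₁⋯zₘ` is a left normal form: the factors lie in `M⁺` and the number
of factors is minimal among all such decompositions. -/
def IsLeftNF (k : ℕ) (x : Artin k) (r : ℤ) (zs : List (Artin k)) : Prop :=
  (∀ z ∈ zs, z ∈ Mplus k) ∧ x = Artin.Delta k ^ r * zs.prod ∧
    ∀ (r' : ℤ) (zs' : List (Artin k)), (∀ z ∈ zs', z ∈ Mplus k) →
      x = Artin.Delta k ^ r' * zs'.prod → zs.length ≤ zs'.length

/-- The number of canonical factors of length `i` in the list of factors `zs`. -/
noncomputable def countLen {k : ℕ} (zs : List (Artin k)) (i : ℕ) : ℕ :=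
  Nat.card {j : Fin zs.length //
    zs.get j = prodd (Artin.a k) (Artin.b k) i ∨ zs.get j = prodd (Artin.b k) (Artin.a k) i}

/-- The vector `π`: `piOf r zs j = r + m_{k-1} + ⋯ + m_{k-j}`. -/
noncomputable def piOf (k : ℕ) (r : ℤ) (zs : List (Artin k)) (j : ℕ) : ℤ :=
  r + ∑ t ∈ Finset.range j, (countLen zs (k - 1 - t) : ℤ)

section AuxLemmas

lemma map_prodd {G H : Type*} [Monoid G] [Monoid H] (f : G →* H) (s t : G) (n : ℕ) :
    f (prodd s t n) = prodd (f s) (f t) n := by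
  induction n generalizing s t with
  | zero => simp [prodd]
  | succ n ih => simp [prodd, ih]

lemma prodd_add {G : Type*} [Monoid G] (s t : G) (m n : ℕ) :
    prodd s t (m + n) = prodd s t m * (if Even m then prodd s t n else prodd t s n) := by
  induction m generalizing s t with
  | zero => simp [prodd]
  | succ m ih =>
    have h : m + 1 + n = (m + n) + 1 := by omega
    rw [h]
    show s * prodd t s (m + n) = prodd s t (m + 1) * _
    rw [ih t s]
    by_cases hm : Even m <;>
      simp [hm, Nat.even_add_one, prodd, mul_assoc]

lemma delta_rel (k : ℕ) :
    prodd (Artin.a k) (Artin.b k) k = prodd (Artin.b k) (Artin.a k) k := by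
  have hmem : (prodd (FreeGroup.of true) (FreeGroup.of false) k *
      (prodd (FreeGroup.of false) (FreeGroup.of true) k)⁻¹) ∈ ArtinRels k := rfl
  have h1 : (PresentedGroup.mk (ArtinRels k))
      (prodd (FreeGroup.of true) (FreeGroup.of false) k *
      (prodd (FreeGroup.of false) (FreeGroup.of true) k)⁻¹) = 1 := by
    rw [PresentedGroup.mk_eq_one_iff]
    exact Subgroup.subset_normalClosure hmem
  rw [map_mul, map_inv, map_prodd, map_prodd, mul_inv_eq_one] at h1
  exact h1

lemma delta_ba (k : ℕ) : Artin.Delta k = prodd (Artin.b k) (Artin.a k) k :=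
  delta_rel k

lemma key_conj (k : ℕ) {s t : Artin k} (hs : prodd s t k = Artin.Delta k)
    (ht : prodd t s k = Artin.Delta k) (i : ℕ) :
    prodd s t i * Artin.Delta k =
      Artin.Delta k * (if Even k then prodd s t i else prodd t s i) := by
  have h1 : prodd s t (i + k) = prodd s t i * Artin.Delta k := by
    rw [prodd_add]
    split_ifs with h
    · rw [hs]
    · rw [ht]
  have h2 : prodd s t (k + i) =
      Artin.Delta k * (if Even k then prodd s t i else prodd t s i) := by
    rw [prodd_add, hs]
  rw [← h1, ← h2, add_comm]

lemma conj_right (k : ℕ) (x : Artin k) (hx : x ∈ Mplus k) :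
    ∃ y ∈ Mplus k, x * Artin.Delta k = Artin.Delta k * y := by
  obtain ⟨i, hi1, hi2, hx | hx⟩ := hx <;> subst hx
  · refine ⟨if Even k then prodd (Artin.a k) (Artin.b k) i else prodd (Artin.b k) (Artin.a k) i,
      ?_, key_conj k rfl (delta_ba k).symm i⟩
    split_ifs
    · exact ⟨i, hi1, hi2, Or.inl rfl⟩
    · exact ⟨i, hi1, hi2, Or.inr rfl⟩
  · refine ⟨if Even k then prodd (Artin.b k) (Artin.a k) i else prodd (Artin.a k) (Artin.b k) i,
      ?_, key_conj k (delta_ba k).symm rfl i⟩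
    split_ifs
    · exact ⟨i, hi1, hi2, Or.inr rfl⟩
    · exact ⟨i, hi1, hi2, Or.inl rfl⟩

lemma conj_left (k : ℕ) (x : Artin k) (hx : x ∈ Mplus k) :
    ∃ y ∈ Mplus k, Artin.Delta k * x = y * Artin.Delta k := by
  obtain ⟨i, hi1, hi2, hx | hx⟩ := hx <;> subst hx
  · by_cases h : Even k
    · refine ⟨prodd (Artin.a k) (Artin.b k) i, ⟨i, hi1, hi2, Or.inl rfl⟩, ?_⟩
      have := key_conj k rfl (delta_ba k).symm i
      simp only [if_pos h] at this
      exact this.symm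
    · refine ⟨prodd (Artin.b k) (Artin.a k) i, ⟨i, hi1, hi2, Or.inr rfl⟩, ?_⟩
      have := key_conj k (delta_ba k).symm rfl i
      simp only [if_neg h] at this
      exact this.symm
  · by_cases h : Even k
    · refine ⟨prodd (Artin.b k) (Artin.a k) i, ⟨i, hi1, hi2, Or.inr rfl⟩, ?_⟩
      have := key_conj k (delta_ba k).symm rfl i
      simp only [if_pos h] at this
      exact this.symm
    · refine ⟨prodd (Artin.a k) (Artin.b k) i, ⟨i, hi1, hi2, Or.inl rfl⟩, ?_⟩
      have := key_conj k rfl (delta_ba k).symm i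
      simp only [if_neg h] at this
      exact this.symm

lemma push_list_left (k : ℕ) (ws : List (Artin k)) (h : ∀ z ∈ ws, z ∈ Mplus k) :
    ∃ ws' : List (Artin k), (∀ z ∈ ws', z ∈ Mplus k) ∧
      Artin.Delta k * ws.prod = ws'.prod * Artin.Delta k := by
  induction ws with
  | nil => exact ⟨[], by simp, by simp⟩
  | cons x ws ih =>
    obtain ⟨ws', h1, h2⟩ := ih (fun z hz => h z (List.mem_cons_of_mem _ hz))
    obtain ⟨y, hy, hxy⟩ := conj_left k x (h x List.mem_cons_self)
    refine ⟨y :: ws', ?_, ?_⟩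
    · intro z hz
      rcases List.mem_cons.mp hz with rfl | hz
      · exact hy
      · exact h1 z hz
    · calc Artin.Delta k * (x :: ws).prod = (Artin.Delta k * x) * ws.prod := by
            simp [mul_assoc]
        _ = y * (Artin.Delta k * ws.prod) := by rw [hxy, mul_assoc]
        _ = y * (ws'.prod * Artin.Delta k) := by rw [h2]
        _ = (y :: ws').prod * Artin.Delta k := by simp [mul_assoc]

lemma push_list_inv (k : ℕ) (ws : List (Artin k)) (h : ∀ z ∈ ws, z ∈ Mplus k) :
    ∃ ws' : List (Artin k), (∀ z ∈ ws', z ∈ Mplus k) ∧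
      (Artin.Delta k)⁻¹ * ws.prod = ws'.prod * (Artin.Delta k)⁻¹ := by
  induction ws with
  | nil => exact ⟨[], by simp, by simp⟩
  | cons x ws ih =>
    obtain ⟨ws', h1, h2⟩ := ih (fun z hz => h z (List.mem_cons_of_mem _ hz))
    obtain ⟨y, hy, hxy⟩ := conj_right k x (h x List.mem_cons_self)
    have hxy' : (Artin.Delta k)⁻¹ * x = y * (Artin.Delta k)⁻¹ := by
      have := congrArg (fun g => (Artin.Delta k)⁻¹ * (g * (Artin.Delta k)⁻¹)) hxy
      simpa [mul_assoc] using this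
    refine ⟨y :: ws', ?_, ?_⟩
    · intro z hz
      rcases List.mem_cons.mp hz with rfl | hz
      · exact hy
      · exact h1 z hz
    · calc (Artin.Delta k)⁻¹ * (x :: ws).prod
          = ((Artin.Delta k)⁻¹ * x) * ws.prod := by simp [mul_assoc]
        _ = y * ((Artin.Delta k)⁻¹ * ws.prod) := by rw [hxy', mul_assoc]
        _ = y * (ws'.prod * (Artin.Delta k)⁻¹) := by rw [h2]
        _ = (y :: ws').prod * (Artin.Delta k)⁻¹ := by simp [mul_assoc]

lemma push_zpow (k : ℕ) (r : ℤ) :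
    ∀ ws : List (Artin k), (∀ z ∈ ws, z ∈ Mplus k) →
    ∃ ws' : List (Artin k), (∀ z ∈ ws', z ∈ Mplus k) ∧
      Artin.Delta k ^ r * ws.prod = ws'.prod * Artin.Delta k ^ r := by
  induction r using Int.induction_on with
  | zero => exact fun ws h => ⟨ws, h, by simp⟩
  | succ n ih =>
    intro ws h
    obtain ⟨ws1, h1, e1⟩ := push_list_left k ws h
    obtain ⟨ws2, h2, e2⟩ := ih ws1 h1
    refine ⟨ws2, h2, ?_⟩
    rw [zpow_add_one]
    calc Artin.Delta k ^ (n : ℤ) * Artin.Delta k * ws.prod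
        = Artin.Delta k ^ (n : ℤ) * (Artin.Delta k * ws.prod) := by rw [mul_assoc]
      _ = Artin.Delta k ^ (n : ℤ) * (ws1.prod * Artin.Delta k) := by rw [e1]
      _ = (Artin.Delta k ^ (n : ℤ) * ws1.prod) * Artin.Delta k := by rw [mul_assoc]
      _ = ws2.prod * Artin.Delta k ^ (n : ℤ) * Artin.Delta k := by rw [e2]
      _ = ws2.prod * (Artin.Delta k ^ (n : ℤ) * Artin.Delta k) := by rw [mul_assoc]
  | pred n ih =>
    intro ws h
    obtain ⟨ws1, h1, e1⟩ := push_list_inv k ws h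
    obtain ⟨ws2, h2, e2⟩ := ih ws1 h1
    refine ⟨ws2, h2, ?_⟩
    rw [zpow_sub_one]
    calc Artin.Delta k ^ (-(n : ℤ)) * (Artin.Delta k)⁻¹ * ws.prod
        = Artin.Delta k ^ (-(n : ℤ)) * ((Artin.Delta k)⁻¹ * ws.prod) := by rw [mul_assoc]
      _ = Artin.Delta k ^ (-(n : ℤ)) * (ws1.prod * (Artin.Delta k)⁻¹) := by rw [e1]
      _ = (Artin.Delta k ^ (-(n : ℤ)) * ws1.prod) * (Artin.Delta k)⁻¹ := by rw [mul_assoc]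
      _ = ws2.prod * Artin.Delta k ^ (-(n : ℤ)) * (Artin.Delta k)⁻¹ := by rw [e2]
      _ = ws2.prod * (Artin.Delta k ^ (-(n : ℤ)) * (Artin.Delta k)⁻¹) := by rw [mul_assoc]

lemma a_mem (k : ℕ) (hk : 3 ≤ k) : Artin.a k ∈ Mplus k :=
  ⟨1, le_refl 1, by omega, Or.inl (by simp [prodd])⟩

lemma b_mem (k : ℕ) (hk : 3 ≤ k) : Artin.b k ∈ Mplus k :=
  ⟨1, le_refl 1, by omega, Or.inr (by simp [prodd])⟩

lemma a_inv (k : ℕ) (hk : 3 ≤ k) :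
    (Artin.a k)⁻¹ = prodd (Artin.b k) (Artin.a k) (k - 1) * (Artin.Delta k)⁻¹ := by
  obtain ⟨m, rfl⟩ : ∃ m, k = m + 1 := ⟨k - 1, by omega⟩
  have h : Artin.a (m + 1) * prodd (Artin.b (m + 1)) (Artin.a (m + 1)) m
      = Artin.Delta (m + 1) := rfl
  simp only [Nat.add_sub_cancel]
  rw [eq_mul_inv_iff_mul_eq, inv_mul_eq_iff_eq_mul]
  exact h.symm

lemma b_inv (k : ℕ) (hk : 3 ≤ k) :
    (Artin.b k)⁻¹ = prodd (Artin.a k) (Artin.b k) (k - 1) * (Artin.Delta k)⁻¹ := by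
  obtain ⟨m, rfl⟩ : ∃ m, k = m + 1 := ⟨k - 1, by omega⟩
  have h : Artin.b (m + 1) * prodd (Artin.a (m + 1)) (Artin.b (m + 1)) m
      = Artin.Delta (m + 1) := by rw [delta_ba (m + 1)]; rfl
  simp only [Nat.add_sub_cancel]
  rw [eq_mul_inv_iff_mul_eq, inv_mul_eq_iff_eq_mul]
  exact h.symm

end AuxLemmas

theorem exists_right_normal_decomposition (k : ℕ) (hk : 3 ≤ k) (w : Artin k) :
    ∃ (r : ℤ) (ws : List (Artin k)),
      (∀ z ∈ ws, z ∈ Mplus k) ∧ w = ws.prod * Artin.Delta k ^ r := by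
  obtain ⟨g, rfl⟩ := PresentedGroup.mk_surjective (ArtinRels k) w
  induction g using FreeGroup.induction_on with
  | C1 => exact ⟨0, [], by simp, by simp⟩
  | of x =>
    cases x
    · refine ⟨0, [Artin.b k], ?_, by simp; rfl⟩
      intro z hz
      simp only [List.mem_singleton] at hz
      subst hz
      exact b_mem k hk
    · refine ⟨0, [Artin.a k], ?_, by simp; rfl⟩
      intro z hz
      simp only [List.mem_singleton] at hz
      subst hz
      exact a_mem k hk
  | inv_of x _ =>
    cases x
    · refine ⟨-1, [prodd (Artin.a k) (Artin.b k) (k - 1)],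
        fun z hz => ?_, ?_⟩
      · simp only [List.mem_singleton] at hz
        subst hz
        exact ⟨k - 1, by omega, le_refl _, Or.inl rfl⟩
      · rw [map_inv]
        show (Artin.b k)⁻¹ = _
        rw [b_inv k hk]
        simp [zpow_neg, zpow_one]
    · refine ⟨-1, [prodd (Artin.b k) (Artin.a k) (k - 1)],
        fun z hz => ?_, ?_⟩
      · simp only [List.mem_singleton] at hz
        subst hz
        exact ⟨k - 1, by omega, le_refl _, Or.inr rfl⟩
      · rw [map_inv]
        show (Artin.a k)⁻¹ = _
        rw [a_inv k hk]
        simp [zpow_neg, zpow_one]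
  | mul x y ihx ihy =>
    obtain ⟨r, ws, hws, hw⟩ := ihx
    obtain ⟨s, vs, hvs, hv⟩ := ihy
    obtain ⟨vs', hvs', hv'⟩ := push_zpow k r vs hvs
    refine ⟨r + s, ws ++ vs', ?_, ?_⟩
    · intro z hz
      rcases List.mem_append.mp hz with h | h
      exacts [hws z h, hvs' z h]
    · rw [map_mul, hw, hv, zpow_add, List.prod_append]
      calc ws.prod * Artin.Delta k ^ r * (vs.prod * Artin.Delta k ^ s)
          = ws.prod * (Artin.Delta k ^ r * vs.prod) * Artin.Delta k ^ s := by
            simp [mul_assoc]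
        _ = ws.prod * (vs'.prod * Artin.Delta k ^ r) * Artin.Delta k ^ s := by rw [hv']
        _ = ws.prod * vs'.prod * (Artin.Delta k ^ r * Artin.Delta k ^ s) := by
            simp [mul_assoc]
end

section
/- In the dihedral Artin group A_k, define φ(w,z) = π(w⁻¹z) − π(z) for w,z ∈ A_k, where π is the vector of partial sums of canonical-factor counts in the left normal form. Then Σ_{i=0}^{k−1} φᵢ(w,z) = Σ_{i=0}^{k−1} πᵢ(w⁻¹); in particular this sum is independent of z. -/
/-! ### Auxiliary material: the exponent-sum homomorphism -/

section Aux

open Finset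

lemma prodd_map {G H : Type*} [Monoid G] [Monoid H] (F : G →* H) (s t : G) (n : ℕ) :
    F (prodd s t n) = prodd (F s) (F t) n := by
  induction n generalizing s t with
  | zero => simp [prodd]
  | succ n ih => simp [prodd, ih]

lemma prodd_self {G : Type*} [Monoid G] (c : G) (n : ℕ) : prodd c c n = c ^ n := by
  induction n with
  | zero => simp [prodd]
  | succ n ih => rw [prodd, ih, pow_succ']

lemma eps_rel (k : ℕ) : ∀ r ∈ ArtinRels k,
    FreeGroup.lift (fun _ : Bool => Multiplicative.ofAdd (1 : ℤ)) r = 1 := by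
  intro r hr
  rcases hr with rfl
  rw [map_mul, map_inv, prodd_map, prodd_map]
  simp [prodd_self]

/-- The exponent-sum homomorphism `A_k → ℤ` sending `a, b ↦ 1`. -/
noncomputable def epsHom (k : ℕ) : Artin k →* Multiplicative ℤ :=
  PresentedGroup.toGroup (eps_rel k)

noncomputable def eps (k : ℕ) (x : Artin k) : ℤ := Multiplicative.toAdd (epsHom k x)

lemma eps_mul (k : ℕ) (x y : Artin k) : eps k (x * y) = eps k x + eps k y := by
  simp [eps, map_mul]

lemma eps_a (k : ℕ) : epsHom k (Artin.a k) = Multiplicative.ofAdd (1 : ℤ) :=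
  PresentedGroup.toGroup.of _

lemma eps_b (k : ℕ) : epsHom k (Artin.b k) = Multiplicative.ofAdd (1 : ℤ) :=
  PresentedGroup.toGroup.of _

lemma eps_prodd_ab (k n : ℕ) : eps k (prodd (Artin.a k) (Artin.b k) n) = n := by
  simp [eps, prodd_map (epsHom k), eps_a, eps_b, prodd_self]

lemma eps_prodd_ba (k n : ℕ) : eps k (prodd (Artin.b k) (Artin.a k) n) = n := by
  simp [eps, prodd_map (epsHom k), eps_a, eps_b, prodd_self]

lemma eps_Delta_zpow (k : ℕ) (r : ℤ) : eps k (Artin.Delta k ^ r) = k * r := by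
  have h : epsHom k (Artin.Delta k ^ r) = (epsHom k (Artin.Delta k)) ^ r := map_zpow _ _ _
  have hD : epsHom k (Artin.Delta k) = Multiplicative.ofAdd (k : ℤ) := by
    have := eps_prodd_ab k k
    simpa [Artin.Delta, eps] using congrArg Multiplicative.ofAdd this
  simp [eps, h, hD, ← ofAdd_zsmul, mul_comm]

lemma eps_list_prod (k : ℕ) (l : List (Artin k)) :
    eps k l.prod = (l.map (eps k)).sum := by
  induction l with
  | nil => simp [eps]
  | cons x t ih => simp [eps_mul, ih]

open Classical in
lemma countLen_eq_card (k : ℕ) (zs : List (Artin k)) (i : ℕ) :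
    countLen zs i = (Finset.univ.filter (fun j : Fin zs.length =>
      zs.get j = prodd (Artin.a k) (Artin.b k) i ∨
      zs.get j = prodd (Artin.b k) (Artin.a k) i)).card := by
  rw [countLen, Nat.card_eq_fintype_card, Fintype.card_subtype]

/-- Swap of double sums: `∑_{i<n} ∑_{t<i} g t = ∑_{t<n} (n-1-t) * g t`. -/
lemma sum_sum_range (g : ℕ → ℤ) (n : ℕ) :
    ∑ i ∈ Finset.range n, ∑ t ∈ Finset.range i, g t =
      ∑ t ∈ Finset.range n, ((n - 1 - t : ℕ) : ℤ) * g t := by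
  induction n with
  | zero => simp
  | succ n ih =>
    rw [Finset.sum_range_succ, ih, Finset.sum_range_succ]
    have h0 : ((n + 1 - 1 - n : ℕ) : ℤ) = 0 := by norm_num
    rw [h0, zero_mul, add_zero, ← Finset.sum_add_distrib]
    apply Finset.sum_congr rfl
    intro t ht
    have ht' : t < n := Finset.mem_range.mp ht
    have : (n + 1 - 1 - t : ℕ) = (n - 1 - t) + 1 := by omega
    rw [this]
    push_cast
    ring

/-- Key: total sum of `piOf` equals `eps` of the element, for any decomposition. -/
lemma sum_piOf_eq_eps (k : ℕ) (hk : 3 ≤ k) (x : Artin k) (r : ℤ) (zs : List (Artin k))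
    (hz : ∀ z ∈ zs, z ∈ Mplus k) (hx : x = Artin.Delta k ^ r * zs.prod) :
    ∑ i ∈ Finset.range k, piOf k r zs i = eps k x := by
  classical
  have hk0 : 0 < k := by omega
  -- rewrite LHS
  have L1 : ∑ i ∈ Finset.range k, piOf k r zs i =
      (k : ℤ) * r + ∑ i ∈ Finset.range k, ∑ t ∈ Finset.range i,
        (countLen zs (k - 1 - t) : ℤ) := by
    simp only [piOf]
    rw [Finset.sum_add_distrib, Finset.sum_const, Finset.card_range, nsmul_eq_mul]
  rw [L1, sum_sum_range]
  have L2 : ∑ t ∈ Finset.range k, ((k - 1 - t : ℕ) : ℤ) * (countLen zs (k - 1 - t) : ℤ) =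
      ∑ s ∈ Finset.range k, (s : ℤ) * (countLen zs s : ℤ) :=
    Finset.sum_range_reflect (fun s => (s : ℤ) * (countLen zs s : ℤ)) k
  rw [L2]
  -- turn the countLen sum into a sum over positions
  have L3 : ∑ s ∈ Finset.range k, (s : ℤ) * (countLen zs s : ℤ) =
      ∑ j : Fin zs.length, eps k (zs.get j) := by
    have hc : ∀ s, (countLen zs s : ℤ) = ∑ j : Fin zs.length,
        (if zs.get j = prodd (Artin.a k) (Artin.b k) s ∨
            zs.get j = prodd (Artin.b k) (Artin.a k) s then (1 : ℤ) else 0) := by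
      intro s
      rw [countLen_eq_card k zs s, Finset.card_filter]
      push_cast
      rfl
    calc ∑ s ∈ Finset.range k, (s : ℤ) * (countLen zs s : ℤ)
        = ∑ s ∈ Finset.range k, ∑ j : Fin zs.length,
            (if zs.get j = prodd (Artin.a k) (Artin.b k) s ∨
                zs.get j = prodd (Artin.b k) (Artin.a k) s then (s : ℤ) else 0) := by
          apply Finset.sum_congr rfl
          intro s _
          rw [hc s, Finset.mul_sum]
          apply Finset.sum_congr rfl
          intro j _
          split <;> simp
      _ = ∑ j : Fin zs.length, ∑ s ∈ Finset.range k,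
            (if zs.get j = prodd (Artin.a k) (Artin.b k) s ∨
                zs.get j = prodd (Artin.b k) (Artin.a k) s then (s : ℤ) else 0) :=
          Finset.sum_comm
      _ = ∑ j : Fin zs.length, eps k (zs.get j) := by
          apply Finset.sum_congr rfl
          intro j _
          obtain ⟨i, hi1, hi2, hi3⟩ := hz (zs.get j) (zs.get_mem j)
          have heps : eps k (zs.get j) = i := by
            rcases hi3 with h | h
            · rw [h, eps_prodd_ab]
            · rw [h, eps_prodd_ba]
          simp only [List.get_eq_getElem] at hi3 heps ⊢
          have hcond : ∀ s, (zs[j.1] = prodd (Artin.a k) (Artin.b k) s ∨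
              zs[j.1] = prodd (Artin.b k) (Artin.a k) s) ↔ s = i := by
            intro s
            constructor
            · intro h
              have : eps k zs[j.1] = s := by
                rcases h with h | h
                · rw [h, eps_prodd_ab]
                · rw [h, eps_prodd_ba]
              have := this.symm.trans heps
              exact_mod_cast this
            · rintro rfl; exact hi3
          have : ∑ s ∈ Finset.range k, (if zs[j.1] = prodd (Artin.a k) (Artin.b k) s ∨
                zs[j.1] = prodd (Artin.b k) (Artin.a k) s then (s : ℤ) else 0) =
              ∑ s ∈ Finset.range k, (if s = i then (s : ℤ) else 0) := by
            apply Finset.sum_congr rfl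
            intro s _
            simp [hcond s]
          rw [this, Finset.sum_ite_eq' (Finset.range k) i (fun s => (s : ℤ))]
          rw [if_pos (Finset.mem_range.mpr (by omega))]
          exact heps.symm
  rw [L3]
  -- RHS
  have R1 : eps k x = (k : ℤ) * r + eps k zs.prod := by
    rw [hx, eps_mul, eps_Delta_zpow]
  rw [R1]
  congr 1
  rw [eps_list_prod, ← Fin.sum_univ_getElem (zs.map (eps k))]
  refine Fintype.sum_equiv (finCongr (List.length_map ..).symm) _ _ ?_
  intro j
  simp

end Aux

theorem sum_phi_eq_sum_pi (k : ℕ) (hk : 3 ≤ k) (w z : Artin k)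
    (r₁ r₂ r₃ : ℤ) (zs₁ zs₂ zs₃ : List (Artin k))
    (h₁ : IsLeftNF k (w⁻¹ * z) r₁ zs₁) (h₂ : IsLeftNF k z r₂ zs₂)
    (h₃ : IsLeftNF k w⁻¹ r₃ zs₃) :
    ∑ i ∈ Finset.range k, (piOf k r₁ zs₁ i - piOf k r₂ zs₂ i) =
      ∑ i ∈ Finset.range k, piOf k r₃ zs₃ i := by
  rw [Finset.sum_sub_distrib]
  rw [sum_piOf_eq_eps k hk _ r₁ zs₁ h₁.1 h₁.2.1,
      sum_piOf_eq_eps k hk _ r₂ zs₂ h₂.1 h₂.2.1,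
      sum_piOf_eq_eps k hk _ r₃ zs₃ h₃.1 h₃.2.1]
  rw [eps_mul]
  ring
end

section
/- Let w = δʳ w₁⋯wₛ be an element of the dihedral Artin group A_k written in left normal form with respect to the dual Garside structure, where δ = σ₁σ₂ is the dual Garside element and each wⱼ ∈ {σ₁,…,σ_k}. Then the word length of w with respect to the dual generators {σ₁^{±1},…,σ_k^{±1}} equals |r| + |r+s|. -/
/-- The relations `σᵢσᵢ₊₁ = σ₁σ₂` (indices mod `k`) of the dual presentation. -/
def DualRels (k : ℕ) [NeZero k] : Set (FreeGroup (Fin k)) :=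
  {x | ∃ i : Fin k, x = FreeGroup.of i * FreeGroup.of (i + 1) *
    (FreeGroup.of 0 * FreeGroup.of 1)⁻¹}

/-- The dihedral Artin group with its dual presentation
`⟨σ₁,…,σ_k ∣ σ₁σ₂ = σ₂σ₃ = ⋯ = σ_kσ₁⟩`. -/
abbrev DualArtin (k : ℕ) [NeZero k] : Type := PresentedGroup (DualRels k)

/-- The dual generator `σᵢ` (indexed by `Fin k`). -/
def sig {k : ℕ} [NeZero k] (i : Fin k) : DualArtin k := PresentedGroup.of i

/-- The dual Garside element `δ = σ₁σ₂`. -/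
def dualDelta (k : ℕ) [NeZero k] : DualArtin k := sig 0 * sig 1

/-- The dual generating set `{σ₁^{±1},…,σ_k^{±1}}`. -/
def dualGens (k : ℕ) [NeZero k] : Set (DualArtin k) :=
  {x | ∃ i : Fin k, x = sig i ∨ x = (sig i)⁻¹}

/-- A word in the dual generators: `(i, true)` stands for `σᵢ`, `(i, false)` for `σᵢ⁻¹`. -/
def evalWord {k : ℕ} [NeZero k] (y : List (Fin k × Bool)) : DualArtin k :=
  (y.map fun p => if p.2 then sig p.1 else (sig p.1)⁻¹).prod

/-- A word is freely reduced if no letter is immediately followed by its inverse. -/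
def FreelyReduced {k : ℕ} [NeZero k] (y : List (Fin k × Bool)) : Prop :=
  y.Chain' fun p q => ¬(q.1 = p.1 ∧ q.2 = !p.2)

/-- `dualPoss y`: the length of the longest element of `{σ₁,…,σ_k,δ}` (with the `σᵢ`
of length 1 and `δ` of length 2) obtainable as a product of consecutive letters of `y`. -/
noncomputable def dualPoss {k : ℕ} [NeZero k] (y : List (Fin k × Bool)) : ℕ :=
  sSup ({0} ∪ {n | ∃ u : List (Fin k × Bool), u ≠ [] ∧ u.IsInfix y ∧
    ((n = 1 ∧ ∃ j : Fin k, evalWord u = sig j) ∨ (n = 2 ∧ evalWord u = dualDelta k))})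

/-- `dualNegg y`: the analogue of `dualPoss` for `{σ₁⁻¹,…,σ_k⁻¹,δ⁻¹}`. -/
noncomputable def dualNegg {k : ℕ} [NeZero k] (y : List (Fin k × Bool)) : ℕ :=
  sSup ({0} ∪ {n | ∃ u : List (Fin k × Bool), u ≠ [] ∧ u.IsInfix y ∧
    ((n = 1 ∧ ∃ j : Fin k, evalWord u = (sig j)⁻¹) ∨ (n = 2 ∧ evalWord u = (dualDelta k)⁻¹))})

/-- `y` is a geodesic word: its length equals the word length of the element it represents. -/
def IsGeodesicWord {k : ℕ} [NeZero k] (y : List (Fin k × Bool)) : Prop :=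
  wordLength (dualGens k) (evalWord y) = y.length

/-- `w = δ^r w₁⋯wₛ` is a left dual normal form: the `wⱼ` are positive dual generators
and `s` is minimal among all such decompositions. -/
def IsDualLNF {k : ℕ} [NeZero k] (w : DualArtin k) (r : ℤ) (ws : List (DualArtin k)) : Prop :=
  (∀ x ∈ ws, ∃ i : Fin k, x = sig i) ∧ w = dualDelta k ^ r * ws.prod ∧
    ∀ (r' : ℤ) (ws' : List (DualArtin k)), (∀ x ∈ ws', ∃ i : Fin k, x = sig i) →
      w = dualDelta k ^ r' * ws'.prod → ws.length ≤ ws'.length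

namespace DA
open Fin.CommRing
variable {k : ℕ} [NeZero k]

lemma rel (i : Fin k) : sig i * sig (i + 1) = dualDelta k := by
  have hmem : (FreeGroup.of i * FreeGroup.of (i + 1) * (FreeGroup.of 0 * FreeGroup.of 1)⁻¹)
      ∈ Subgroup.normalClosure (DualRels k) :=
    Subgroup.subset_normalClosure ⟨i, rfl⟩
  have h1 : (PresentedGroup.mk (DualRels k))
      (FreeGroup.of i * FreeGroup.of (i + 1) * (FreeGroup.of 0 * FreeGroup.of 1)⁻¹) = 1 :=
    (QuotientGroup.eq_one_iff _).mpr hmem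
  rw [map_mul, map_mul, map_inv, map_mul] at h1
  have h2 : sig i * sig (i + 1) * (sig 0 * sig 1)⁻¹ = 1 := h1
  rw [dualDelta]
  exact mul_inv_eq_one.mp h2

lemma conj (i : Fin k) : sig i * dualDelta k = dualDelta k * sig (i + 2) := by
  have h1 := rel i
  have h2 := rel (i + 1)
  rw [show i + 1 + 1 = i + 2 from by ring] at h2
  have e1 : sig i = dualDelta k * (sig (i + 1))⁻¹ := eq_mul_inv_of_mul_eq h1
  have e2 : sig (i + 1) = dualDelta k * (sig (i + 2))⁻¹ := eq_mul_inv_of_mul_eq h2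
  rw [e1, e2]
  group

lemma conj_inv (j : Fin k) : sig j * (dualDelta k)⁻¹ = (dualDelta k)⁻¹ * sig (j - 2) := by
  have h := conj (j - 2)
  rw [show j - 2 + 2 = j from by ring] at h
  calc sig j * (dualDelta k)⁻¹
      = (dualDelta k)⁻¹ * (sig (j - 2) * dualDelta k) * (dualDelta k)⁻¹ := by rw [h]; group
    _ = (dualDelta k)⁻¹ * sig (j - 2) := by group

lemma sig_zpow (m : ℤ) (i : Fin k) :
    sig i * dualDelta k ^ m = dualDelta k ^ m * sig (i + 2 * (m : Fin k)) := by
  induction m using Int.induction_on with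
  | zero => norm_num
  | succ n ih =>
    have e : i + 2 * (((n : ℤ) + 1 : ℤ) : Fin k) = (i + 2 * ((n : ℤ) : Fin k)) + 2 := by
      push_cast; ring
    calc sig i * dualDelta k ^ ((n : ℤ) + 1)
        = (sig i * dualDelta k ^ (n : ℤ)) * dualDelta k := by rw [zpow_add_one]; group
      _ = dualDelta k ^ (n : ℤ) * (sig (i + 2 * ((n : ℤ) : Fin k)) * dualDelta k) := by
          rw [ih]; group
      _ = dualDelta k ^ (n : ℤ) * (dualDelta k * sig ((i + 2 * ((n : ℤ) : Fin k)) + 2)) := by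
          rw [conj]
      _ = dualDelta k ^ ((n : ℤ) + 1) * sig (i + 2 * (((n : ℤ) + 1 : ℤ) : Fin k)) := by
          rw [e, zpow_add_one]; group
  | pred n ih =>
    have e : i + 2 * ((-(n : ℤ) - 1 : ℤ) : Fin k) = (i + 2 * ((-(n : ℤ) : ℤ) : Fin k)) - 2 := by
      push_cast; ring
    calc sig i * dualDelta k ^ (-(n : ℤ) - 1)
        = (sig i * dualDelta k ^ (-(n : ℤ))) * (dualDelta k)⁻¹ := by rw [zpow_sub_one]; group
      _ = dualDelta k ^ (-(n : ℤ)) * (sig (i + 2 * ((-(n : ℤ) : ℤ) : Fin k)) * (dualDelta k)⁻¹) := by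
          rw [ih]; group
      _ = dualDelta k ^ (-(n : ℤ)) * ((dualDelta k)⁻¹ * sig ((i + 2 * ((-(n : ℤ) : ℤ) : Fin k)) - 2)) := by
          rw [conj_inv]
      _ = dualDelta k ^ (-(n : ℤ) - 1) * sig (i + 2 * ((-(n : ℤ) - 1 : ℤ) : Fin k)) := by
          rw [e, zpow_sub_one]; group

lemma sig_inv_zpow (m : ℤ) (i : Fin k) :
    (sig i)⁻¹ * dualDelta k ^ m = dualDelta k ^ m * (sig (i + 2 * (m : Fin k)))⁻¹ := by
  have h := sig_zpow m i
  calc (sig i)⁻¹ * dualDelta k ^ m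
      = (sig i)⁻¹ * (dualDelta k ^ m * sig (i + 2 * (m : Fin k))) * (sig (i + 2 * (m : Fin k)))⁻¹ := by
        group
    _ = (sig i)⁻¹ * (sig i * dualDelta k ^ m) * (sig (i + 2 * (m : Fin k)))⁻¹ := by rw [h]
    _ = dualDelta k ^ m * (sig (i + 2 * (m : Fin k)))⁻¹ := by group

lemma sig_inv_eq (i : Fin k) : (sig i)⁻¹ = (dualDelta k)⁻¹ * sig (i - 1) := by
  have h := rel (i - 1)
  rw [show i - 1 + 1 = i from by ring] at h
  rw [← h]; group

lemma sig_eq_delta_mul (i : Fin k) : sig i = dualDelta k * (sig (i + 1))⁻¹ :=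
  eq_mul_inv_of_mul_eq (rel i)

lemma push_normal (l : List (DualArtin k)) (hl : ∀ g ∈ l, g ∈ dualGens k) :
    ∃ (m : ℤ) (v : List (DualArtin k)), (∀ x ∈ v, ∃ i : Fin k, x = sig i) ∧
      v.length = l.length ∧ l.prod = dualDelta k ^ m * v.prod := by
  induction l with
  | nil => exact ⟨0, [], by simp, rfl, by simp⟩
  | cons g l ih =>
    obtain ⟨m, v, hv, hlen, hprod⟩ := ih (fun x hx => hl x (List.mem_cons_of_mem _ hx))
    obtain ⟨i, hi | hi⟩ := hl g List.mem_cons_self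
    · refine ⟨m, sig (i + 2 * (m : Fin k)) :: v, ?_, by simp [hlen], ?_⟩
      · rintro x hx
        rcases List.mem_cons.mp hx with hh | hh
        · exact ⟨_, hh⟩
        · exact hv x hh
      · rw [List.prod_cons, List.prod_cons, hprod, hi]
        have hstep := sig_zpow m i
        calc sig i * (dualDelta k ^ m * v.prod)
            = (sig i * dualDelta k ^ m) * v.prod := by group
          _ = (dualDelta k ^ m * sig (i + 2 * (m : Fin k))) * v.prod := by rw [hstep]
          _ = dualDelta k ^ m * (sig (i + 2 * (m : Fin k)) * v.prod) := by group
    · refine ⟨m - 1, sig ((i - 1) + 2 * (m : Fin k)) :: v, ?_, by simp [hlen], ?_⟩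
      · rintro x hx
        rcases List.mem_cons.mp hx with hh | hh
        · exact ⟨_, hh⟩
        · exact hv x hh
      · rw [List.prod_cons, List.prod_cons, hprod, hi, sig_inv_eq]
        have hstep := sig_zpow m (i - 1)
        calc (dualDelta k)⁻¹ * sig (i - 1) * (dualDelta k ^ m * v.prod)
            = (dualDelta k)⁻¹ * (sig (i - 1) * dualDelta k ^ m) * v.prod := by group
          _ = (dualDelta k)⁻¹ * (dualDelta k ^ m * sig (i - 1 + 2 * (m : Fin k))) * v.prod := by
              rw [hstep]
          _ = dualDelta k ^ (m - 1) * (sig (i - 1 + 2 * (m : Fin k)) * v.prod) := by group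

lemma pos_to_neg (v : List (DualArtin k)) (hv : ∀ x ∈ v, ∃ i : Fin k, x = sig i) :
    ∃ u : List (DualArtin k), (∀ g ∈ u, ∃ i : Fin k, g = (sig i)⁻¹) ∧
      u.length = v.length ∧ v.prod = dualDelta k ^ (v.length : ℤ) * u.prod := by
  induction v with
  | nil => exact ⟨[], by simp, rfl, by simp⟩
  | cons g v ih =>
    obtain ⟨u, hu, hlen, hprod⟩ := ih (fun x hx => hv x (List.mem_cons_of_mem _ hx))
    obtain ⟨i, hi⟩ := hv g List.mem_cons_self
    refine ⟨(sig (i + 1 + 2 * ((v.length : ℤ) : Fin k)))⁻¹ :: u, ?_, by simp [hlen], ?_⟩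
    · rintro x hx
      rcases List.mem_cons.mp hx with hh | hh
      · exact ⟨_, hh⟩
      · exact hu x hh
    · rw [List.prod_cons, List.prod_cons, hprod, hi, sig_eq_delta_mul, List.length_cons]
      have hstep := sig_inv_zpow (v.length : ℤ) (i + 1)
      have hc : ((v.length + 1 : ℕ) : ℤ) = (v.length : ℤ) + 1 := by push_cast; ring
      rw [hc]
      calc dualDelta k * (sig (i + 1))⁻¹ * (dualDelta k ^ (v.length : ℤ) * u.prod)
          = dualDelta k * ((sig (i + 1))⁻¹ * dualDelta k ^ (v.length : ℤ)) * u.prod := by group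
        _ = dualDelta k * (dualDelta k ^ (v.length : ℤ) *
              (sig (i + 1 + 2 * ((v.length : ℤ) : Fin k)))⁻¹) * u.prod := by rw [hstep]
        _ = dualDelta k ^ ((v.length : ℤ) + 1) *
              ((sig (i + 1 + 2 * ((v.length : ℤ) : Fin k)))⁻¹ * u.prod) := by group

lemma delta_list_pos (n : ℕ) : ∃ d : List (DualArtin k), (∀ g ∈ d, g ∈ dualGens k) ∧
    d.length = 2 * n ∧ d.prod = dualDelta k ^ (n : ℤ) := by
  induction n with
  | zero => exact ⟨[], by simp, rfl, by norm_num⟩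
  | succ n ih =>
    obtain ⟨d, h1, h2, h3⟩ := ih
    refine ⟨sig 0 :: sig 1 :: d, ?_, by simp [h2]; omega, ?_⟩
    · intro g hg
      rcases List.mem_cons.mp hg with rfl | hg
      · exact ⟨0, Or.inl rfl⟩
      rcases List.mem_cons.mp hg with rfl | hg
      · exact ⟨1, Or.inl rfl⟩
      · exact h1 g hg
    · rw [List.prod_cons, List.prod_cons, h3]
      have hc : ((n + 1 : ℕ) : ℤ) = (n : ℤ) + 1 := by push_cast; ring
      rw [hc, show (dualDelta k) = sig 0 * sig 1 from rfl]
      group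

lemma delta_list_neg (n : ℕ) : ∃ d : List (DualArtin k), (∀ g ∈ d, g ∈ dualGens k) ∧
    d.length = 2 * n ∧ d.prod = dualDelta k ^ (-(n : ℤ)) := by
  induction n with
  | zero => exact ⟨[], by simp, rfl, by norm_num⟩
  | succ n ih =>
    obtain ⟨d, h1, h2, h3⟩ := ih
    refine ⟨(sig 1)⁻¹ :: (sig 0)⁻¹ :: d, ?_, by simp [h2]; omega, ?_⟩
    · intro g hg
      rcases List.mem_cons.mp hg with rfl | hg
      · exact ⟨1, Or.inr rfl⟩
      rcases List.mem_cons.mp hg with rfl | hg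
      · exact ⟨0, Or.inr rfl⟩
      · exact h1 g hg
    · rw [List.prod_cons, List.prod_cons, h3]
      have hc : ((n + 1 : ℕ) : ℤ) = (n : ℤ) + 1 := by push_cast; ring
      have hinv : (sig 1)⁻¹ * (sig 0)⁻¹ = (dualDelta k)⁻¹ := by
        rw [show (dualDelta k) = sig 0 * sig 1 from rfl]; group
      rw [hc, ← mul_assoc, hinv]
      group

lemma delta_list (m : ℤ) : ∃ d : List (DualArtin k), (∀ g ∈ d, g ∈ dualGens k) ∧
    d.length = 2 * m.natAbs ∧ d.prod = dualDelta k ^ m := by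
  rcases Int.natAbs_eq m with hm | hm
  · obtain ⟨d, h1, h2, h3⟩ := delta_list_pos (k := k) m.natAbs
    exact ⟨d, h1, h2, by rw [h3, ← hm]⟩
  · obtain ⟨d, h1, h2, h3⟩ := delta_list_neg (k := k) m.natAbs
    exact ⟨d, h1, h2, by rw [h3, ← hm]⟩

/-- The exponent-sum homomorphism `σᵢ ↦ 1`. -/
def chi (k : ℕ) [NeZero k] : DualArtin k →* Multiplicative ℤ :=
  PresentedGroup.toGroup (f := fun _ : Fin k => Multiplicative.ofAdd 1) (by
    rintro r ⟨i, rfl⟩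
    simp only [map_mul, map_inv, FreeGroup.lift_apply_of]
    group)

def chiA (w : DualArtin k) : ℤ := Multiplicative.toAdd (chi k w)

lemma chiA_mul (a b : DualArtin k) : chiA (a * b) = chiA a + chiA b := by
  simp [chiA, map_mul]

lemma chiA_sig (i : Fin k) : chiA (sig i) = 1 := by
  simp [chiA, chi, sig, PresentedGroup.toGroup.of]

lemma chiA_inv (a : DualArtin k) : chiA a⁻¹ = -chiA a := by
  simp [chiA, map_inv]

lemma chiA_delta : chiA (dualDelta k) = 2 := by
  rw [show (dualDelta k) = sig 0 * sig 1 from rfl, chiA_mul, chiA_sig, chiA_sig]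
  norm_num

lemma chiA_zpow (a : DualArtin k) (m : ℤ) : chiA (a ^ m) = m * chiA a := by
  simp [chiA, map_zpow, toAdd_zpow, smul_eq_mul]

lemma chiA_pos_list (v : List (DualArtin k)) (hv : ∀ x ∈ v, ∃ i : Fin k, x = sig i) :
    chiA v.prod = (v.length : ℤ) := by
  induction v with
  | nil => simp [chiA]
  | cons g v ih =>
    obtain ⟨i, hi⟩ := hv g List.mem_cons_self
    rw [List.prod_cons, chiA_mul, hi, chiA_sig,
      ih (fun x hx => hv x (List.mem_cons_of_mem _ hx)), List.length_cons]
    push_cast; ring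

lemma chiA_gens_bound (l : List (DualArtin k)) (hl : ∀ g ∈ l, g ∈ dualGens k) :
    (chiA l.prod).natAbs ≤ l.length := by
  induction l with
  | nil => simp [chiA]
  | cons g l ih =>
    have hrec := ih (fun x hx => hl x (List.mem_cons_of_mem _ hx))
    obtain ⟨i, hi | hi⟩ := hl g List.mem_cons_self
    · rw [List.prod_cons, chiA_mul, hi, chiA_sig, List.length_cons]
      omega
    · rw [List.prod_cons, chiA_mul, hi, chiA_inv, chiA_sig, List.length_cons]
      omega

end DA

theorem dual_word_length_formula (k : ℕ) [NeZero k] (hk : 3 ≤ k)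
    (w : DualArtin k) (r : ℤ) (ws : List (DualArtin k)) (h : IsDualLNF w r ws) :
    wordLength (dualGens k) w = r.natAbs + (r + ws.length).natAbs := by
  unfold wordLength
  obtain ⟨hpos, hw, hmin⟩ := h
  -- the target value
  set N := r.natAbs + (r + (ws.length : ℤ)).natAbs with hNdef
  set t := min ws.length (-r).toNat with htdef
  have htle : t ≤ ws.length := min_le_left _ _
  have htake_len : (ws.take t).length = t := by
    rw [List.length_take]; omega
  obtain ⟨u, hu, hulen, huprod⟩ :=
    DA.pos_to_neg (ws.take t) (fun x hx => hpos x (List.take_subset _ _ hx))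
  obtain ⟨d, hd, hdlen, hdprod⟩ := DA.delta_list (k := k) (r + (t : ℤ))
  have hws_prod : ws.prod = dualDelta k ^ (t : ℤ) * u.prod * (ws.drop t).prod := by
    conv_lhs => rw [← List.take_append_drop t ws]
    rw [List.prod_append, huprod, htake_len]
  have hN_mem : N ∈ {n | ∃ l : List (DualArtin k), l.length = n ∧
      (∀ g ∈ l, g ∈ dualGens k) ∧ l.prod = w} := by
    refine ⟨d ++ (u ++ ws.drop t), ?_, ?_, ?_⟩
    · rw [List.length_append, List.length_append, hdlen, hulen, htake_len, List.length_drop]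
      omega
    · intro g hg
      rcases List.mem_append.mp hg with hg | hg
      · exact hd g hg
      rcases List.mem_append.mp hg with hg | hg
      · obtain ⟨i, hi⟩ := hu g hg
        exact ⟨i, Or.inr hi⟩
      · obtain ⟨i, hi⟩ := hpos g (List.drop_subset _ _ hg)
        exact ⟨i, Or.inl hi⟩
    · rw [List.prod_append, List.prod_append, hdprod, hw, hws_prod]
      group
  have hlow : ∀ n ∈ {n | ∃ l : List (DualArtin k), l.length = n ∧
      (∀ g ∈ l, g ∈ dualGens k) ∧ l.prod = w}, N ≤ n := by
    rintro n ⟨l, hlen, hmem, hprod⟩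
    have hb1 : (DA.chiA w).natAbs ≤ n := by
      rw [← hprod, ← hlen]; exact DA.chiA_gens_bound l hmem
    have hb2 : DA.chiA w = 2 * r + (ws.length : ℤ) := by
      rw [hw, DA.chiA_mul, DA.chiA_zpow, DA.chiA_delta, DA.chiA_pos_list ws hpos]
      ring
    obtain ⟨m, v, hv, hvlen, hvprod⟩ := DA.push_normal l hmem
    have hb3 : ws.length ≤ n := by
      have := hmin m v hv (by rw [← hprod, hvprod])
      omega
    rw [hb2] at hb1
    omega
  exact le_antisymm (Nat.sInf_le hN_mem) (le_csInf ⟨N, hN_mem⟩ hlow)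
end

section
/- Let y be a freely reduced word in the dual generators {σ₁^{±1},…,σ_k^{±1}} of the dihedral Artin group A_k (k ≥ 3). Define P(y) as the maximum length (with the σᵢ having length 1 and δ length 2) of an element of {σ₁,…,σ_k,δ} obtainable as a product of consecutive letters of y, and N(y) analogously for {σ₁⁻¹,…,σ_k⁻¹,δ⁻¹}. Then y is a geodesic word if and only if P(y) + N(y) ≤ 2. -/
set_option linter.unusedSectionVars false

namespace DG
variable {k : ℕ} [NeZero k]
open Fin.CommRing

lemma rel_eq (i : Fin k) : sig i * sig (i + 1) = dualDelta k := by
  have h : (PresentedGroup.mk (DualRels k)) (FreeGroup.of i * FreeGroup.of (i + 1) *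
      (FreeGroup.of 0 * FreeGroup.of 1)⁻¹) = 1 := by
    apply (QuotientGroup.eq_one_iff _).mpr
    exact Subgroup.subset_normalClosure ⟨i, rfl⟩
  rw [map_mul, map_inv, mul_inv_eq_one, map_mul, map_mul] at h
  exact h

lemma two_eq (i : Fin k) : i + 1 + 1 = i + 2 := by ring

lemma sig_mul_delta (i : Fin k) : sig i * dualDelta k = dualDelta k * sig (i + 2) := by
  calc sig i * dualDelta k = sig i * (sig (i+1) * sig (i+1+1)) := by rw [rel_eq]
    _ = (sig i * sig (i+1)) * sig (i+1+1) := by rw [mul_assoc]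
    _ = dualDelta k * sig (i+2) := by rw [rel_eq, two_eq]

lemma delta_mul_sig (i : Fin k) : dualDelta k * sig i = sig (i - 2) * dualDelta k := by
  have := sig_mul_delta (i - 2); rw [sub_add_cancel] at this; rw [this]

lemma delta_mul_sig_inv (j : Fin k) : dualDelta k * (sig j)⁻¹ = sig (j - 1) := by
  have := rel_eq (j - 1); rw [sub_add_cancel] at this
  rw [← this, mul_assoc, mul_inv_cancel, mul_one]

lemma sig_inv_mul_delta (j : Fin k) : (sig j)⁻¹ * dualDelta k = sig (j + 1) := by
  rw [← rel_eq j, ← mul_assoc, inv_mul_cancel, one_mul]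

lemma sig_inv_mul_delta' (i : Fin k) : (sig i)⁻¹ * dualDelta k = dualDelta k * (sig (i + 2))⁻¹ := by
  rw [inv_mul_eq_iff_eq_mul, ← mul_assoc, sig_mul_delta, mul_assoc, mul_inv_cancel, mul_one]

lemma delta_mul_sig_inv' (i : Fin k) : dualDelta k * (sig i)⁻¹ = (sig (i - 2))⁻¹ * dualDelta k := by
  have := sig_inv_mul_delta' (i - 2); rw [sub_add_cancel] at this; rw [this]

/-- The group element of a single letter. -/
def letter (p : Fin k × Bool) : DualArtin k := if p.2 then sig p.1 else (sig p.1)⁻¹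

lemma evalWord_eq (y : List (Fin k × Bool)) : evalWord y = (y.map letter).prod := rfl

lemma evalWord_nil : evalWord ([] : List (Fin k × Bool)) = 1 := rfl

lemma evalWord_cons (p : Fin k × Bool) (y : List (Fin k × Bool)) :
    evalWord (p :: y) = letter p * evalWord y := by
  simp [evalWord_eq, letter]

lemma evalWord_append (a b : List (Fin k × Bool)) :
    evalWord (a ++ b) = evalWord a * evalWord b := by
  simp [evalWord_eq]

lemma evalWord_singleton (p : Fin k × Bool) : evalWord [p] = letter p := by
  simp [evalWord_cons, evalWord_nil]

lemma letter_mul_delta (p : Fin k × Bool) :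
    letter p * dualDelta k = dualDelta k * letter (p.1 + 2, p.2) := by
  rcases p with ⟨i, b⟩
  cases b <;> simp [letter, sig_mul_delta, sig_inv_mul_delta']

lemma delta_mul_letter (p : Fin k × Bool) :
    dualDelta k * letter p = letter (p.1 - 2, p.2) * dualDelta k := by
  rcases p with ⟨i, b⟩
  cases b <;> simp [letter, delta_mul_sig, delta_mul_sig_inv']

/-- Shift all letters of a word by a constant. -/
def shW (c : Fin k) (y : List (Fin k × Bool)) : List (Fin k × Bool) :=
  y.map fun p => (p.1 + c, p.2)

@[simp] lemma shW_length (c : Fin k) (y : List (Fin k × Bool)) :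
    (shW c y).length = y.length := by simp [shW]

lemma evalWord_mul_delta (y : List (Fin k × Bool)) :
    evalWord y * dualDelta k = dualDelta k * evalWord (shW 2 y) := by
  induction y with
  | nil => simp [shW, evalWord_nil]
  | cons p t ih =>
    rw [evalWord_cons, mul_assoc, ih]
    have : shW 2 (p :: t) = (p.1 + 2, p.2) :: shW 2 t := rfl
    rw [this, evalWord_cons, ← mul_assoc, letter_mul_delta, mul_assoc]

lemma delta_mul_evalWord (y : List (Fin k × Bool)) :
    dualDelta k * evalWord y = evalWord (shW (-2) y) * dualDelta k := by
  have := evalWord_mul_delta (shW (-2) y)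
  have h2 : shW 2 (shW (-2) y) = y := by
    simp [shW, List.map_map, Function.comp_def]
  rw [h2] at this
  rw [← this]

/-- The exponent-sum homomorphism to `Multiplicative ℤ`. -/
noncomputable def eH : DualArtin k →* Multiplicative ℤ :=
  PresentedGroup.toGroup (f := fun _ : Fin k => Multiplicative.ofAdd (1 : ℤ))
    (by
      rintro r ⟨i, rfl⟩
      rw [map_mul, map_inv, map_mul, map_mul, FreeGroup.lift_apply_of, FreeGroup.lift_apply_of,
        FreeGroup.lift_apply_of, FreeGroup.lift_apply_of]
      group)

@[simp] lemma eH_sig (i : Fin k) : eH (sig i) = Multiplicative.ofAdd (1 : ℤ) :=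
  PresentedGroup.toGroup.of _

/-- number of negative letters -/
def negC (y : List (Fin k × Bool)) : ℕ := y.countP fun p => p.2 = false

/-- number of positive letters -/
def posC (y : List (Fin k × Bool)) : ℕ := y.countP fun p => p.2 = true

lemma posC_add_negC (y : List (Fin k × Bool)) : posC y + negC y = y.length := by
  induction y with
  | nil => rfl
  | cons p t ih =>
    rcases p with ⟨i, b⟩
    cases b <;> simp [posC, negC, List.countP_cons] at ih ⊢ <;> omega

lemma eH_evalWord (y : List (Fin k × Bool)) :
    eH (evalWord y) = Multiplicative.ofAdd ((posC y : ℤ) - negC y) := by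
  induction y with
  | nil => simp [evalWord_nil, posC, negC]
  | cons p t ih =>
    rcases p with ⟨i, b⟩
    rw [evalWord_cons, map_mul, ih]
    cases b
    · have hl : letter ((i, false) : Fin k × Bool) = (sig i)⁻¹ := rfl
      have h1 : negC ((i,false) :: t) = negC t + 1 := by simp [negC, List.countP_cons]
      have h2 : posC ((i,false) :: t) = posC t := by simp [posC, List.countP_cons]
      rw [hl, map_inv, eH_sig, h1, h2, ← ofAdd_neg, ← ofAdd_add]
      congr 1; push_cast; ring
    · have hl : letter ((i, true) : Fin k × Bool) = sig i := rfl
      have h1 : negC ((i,true) :: t) = negC t := by simp [negC, List.countP_cons]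
      have h2 : posC ((i,true) :: t) = posC t + 1 := by simp [posC, List.countP_cons]
      rw [hl, eH_sig, h1, h2, ← ofAdd_add]
      congr 1; push_cast; ring

/-! ### The normal-form state machine -/

/-- Normal-form states: a power of `δ` and a list of positive generators with no
adjacent pair multiplying to `δ`. -/
structure NF (k : ℕ) [NeZero k] where
  r : ℤ
  l : List (Fin k)
  h : l.IsChain fun a b => b ≠ a + 1

lemma NF.ext' {x y : NF k} (hr : x.r = y.r) (hl : x.l = y.l) : x = y := by
  cases x; cases y; cases hr; cases hl; rfl

/-- index shift by the `δ`-power -/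
def jdx (i : Fin k) (r : ℤ) : Fin k := i + r • (2 : Fin k)

lemma jdx_succ (i : Fin k) (r : ℤ) : jdx i (r + 1) = jdx i r + 2 := by
  unfold jdx; rw [add_smul, one_smul]; abel

lemma jdx_pred (i : Fin k) (r : ℤ) : jdx i (r - 1) = jdx i r - 2 := by
  unfold jdx; rw [sub_smul, one_smul]; abel

lemma jdx_zero (i : Fin k) : jdx i 0 = i := by unfold jdx; simp

lemma jdx_add_one (i : Fin k) (r : ℤ) : jdx (i + 1) r = jdx i r + 1 := by
  unfold jdx; abel

lemma jdx_cancel {a b c d : Fin k} {r : ℤ} (h : jdx a r + c = jdx b r + d) : a + c = b + d := by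
  unfold jdx at h
  have : a + c + r • (2 : Fin k) = b + d + r • (2 : Fin k) := by
    rw [show a + c + r • (2:Fin k) = a + r • (2:Fin k) + c by abel, h]; abel
  exact add_right_cancel this

/-- left multiplication by `σᵢ` on normal forms -/
def posAct (i : Fin k) (x : NF k) : NF k :=
  match x with
  | ⟨r, [], _⟩ => ⟨r, [jdx i r], List.isChain_singleton _⟩
  | ⟨r, a :: t, h⟩ =>
    if hc : a = jdx i r + 1 then ⟨r + 1, t, (List.isChain_cons.mp h).2⟩
    else ⟨r, jdx i r :: a :: t, List.isChain_cons_cons.mpr ⟨hc, h⟩⟩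

/-- left multiplication by `σᵢ⁻¹` on normal forms -/
def negAct (i : Fin k) (x : NF k) : NF k :=
  match x with
  | ⟨r, [], _⟩ => ⟨r - 1, [jdx i r - 1], List.isChain_singleton _⟩
  | ⟨r, a :: t, h⟩ =>
    if hc : a = jdx i r then ⟨r, t, (List.isChain_cons.mp h).2⟩
    else ⟨r - 1, (jdx i r - 1) :: a :: t,
      List.isChain_cons_cons.mpr ⟨by rwa [sub_add_cancel], h⟩⟩

lemma pos_neg (i : Fin k) (x : NF k) : negAct i (posAct i x) = x := by
  obtain ⟨r, l, h⟩ := x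
  rcases l with _ | ⟨a, t⟩
  · show negAct i ⟨r, [jdx i r], _⟩ = _
    rw [negAct]
    simp
  · rw [posAct]
    split_ifs with hc
    · subst hc
      rcases t with _ | ⟨b, t'⟩
      · rw [negAct]
        refine NF.ext' (by ring) ?_
        simp only []
        rw [jdx_succ]
        congr 1
        ring
      · have hb : b ≠ jdx i r + 1 + 1 := (List.isChain_cons_cons.mp h).1
        rw [negAct]
        have hb2 : b ≠ jdx i (r + 1) := by rw [jdx_succ]; intro he; apply hb; rw [he]; ring
        rw [dif_neg hb2]
        refine NF.ext' (by ring) ?_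
        simp only []
        rw [jdx_succ]
        congr 1
        ring
    · rw [negAct, dif_pos rfl]

lemma neg_pos (i : Fin k) (x : NF k) : posAct i (negAct i x) = x := by
  obtain ⟨r, l, h⟩ := x
  rcases l with _ | ⟨a, t⟩
  · show posAct i ⟨r - 1, [jdx i r - 1], _⟩ = _
    rw [posAct]
    have : jdx i r - 1 = jdx i (r - 1) + 1 := by rw [jdx_pred]; ring
    rw [dif_pos this]
    exact NF.ext' (by ring) rfl
  · rw [negAct]
    split_ifs with hc
    · subst hc
      rcases t with _ | ⟨b, t'⟩
      · rw [posAct]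
      · have hb : b ≠ jdx i r + 1 := (List.isChain_cons_cons.mp h).1
        rw [posAct, dif_neg hb]
    · rw [posAct]
      have : jdx i r - 1 = jdx i (r - 1) + 1 := by rw [jdx_pred]; ring
      rw [dif_pos this]
      exact NF.ext' (by ring) rfl

/-- `σᵢ` acting as a permutation of normal forms. -/
def L (i : Fin k) : Equiv.Perm (NF k) :=
  ⟨posAct i, negAct i, pos_neg i, neg_pos i⟩

lemma LL (i : Fin k) (x : NF k) : posAct i (posAct (i + 1) x) = ⟨x.r + 1, x.l, x.h⟩ := by
  obtain ⟨r, l, h⟩ := x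
  rcases l with _ | ⟨a, t⟩
  · show posAct i ⟨r, [jdx (i + 1) r], _⟩ = _
    rw [posAct]
    have : jdx (i + 1) r = jdx i r + 1 := jdx_add_one i r
    rw [dif_pos this]
  · rw [posAct]
    split_ifs with hc
    · subst hc
      rcases t with _ | ⟨b, t'⟩
      · rw [posAct]
        refine NF.ext' rfl ?_
        simp only []
        congr 1
        rw [jdx_succ, jdx_add_one]
        ring
      · have hb : b ≠ jdx (i + 1) r + 1 + 1 := (List.isChain_cons_cons.mp h).1
        rw [posAct]
        have hb2 : b ≠ jdx i (r + 1) + 1 := by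
          rw [jdx_succ]; intro he; apply hb; rw [he, jdx_add_one]; ring
        rw [dif_neg hb2]
        refine NF.ext' rfl ?_
        simp only []
        congr 1
        rw [jdx_succ, jdx_add_one]
        ring
    · rw [posAct]
      have : jdx (i + 1) r = jdx i r + 1 := jdx_add_one i r
      rw [dif_pos this]

lemma L_mul_L (i : Fin k) : L i * L (i + 1) = L 0 * L 1 := by
  apply Equiv.ext
  intro x
  rw [Equiv.Perm.mul_apply, Equiv.Perm.mul_apply]
  show posAct i (posAct (i+1) x) = posAct 0 (posAct 1 x)
  rw [LL i x]
  have h1 : (1 : Fin k) = 0 + 1 := by ring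
  rw [h1, LL 0 x]

/-- The action of the dual Artin group on normal forms. -/
noncomputable def phi : DualArtin k →* Equiv.Perm (NF k) :=
  PresentedGroup.toGroup (f := L)
    (by
      rintro r ⟨i, rfl⟩
      rw [map_mul, map_inv, map_mul, map_mul, FreeGroup.lift_apply_of, FreeGroup.lift_apply_of,
        FreeGroup.lift_apply_of, FreeGroup.lift_apply_of, mul_inv_eq_one]
      exact L_mul_L i)

@[simp] lemma phi_sig (i : Fin k) : phi (sig i) = L i := PresentedGroup.toGroup.of _

/-- base state -/
def base (k : ℕ) [NeZero k] : NF k := ⟨0, [], List.isChain_nil⟩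

/-- one step of the state machine -/
def step (p : Fin k × Bool) (x : NF k) : NF k :=
  if p.2 then posAct p.1 x else negAct p.1 x

/-- the state of a word -/
def stW (y : List (Fin k × Bool)) : NF k := y.foldr step (base k)

lemma phi_letter (p : Fin k × Bool) (x : NF k) : phi (letter p) x = step p x := by
  rcases p with ⟨i, b⟩
  cases b
  · have hl : letter ((i, false) : Fin k × Bool) = (sig i)⁻¹ := rfl
    rw [hl, map_inv, phi_sig]
    rfl
  · have hl : letter ((i, true) : Fin k × Bool) = sig i := rfl
    rw [hl, phi_sig]
    rfl

lemma phi_evalWord (y : List (Fin k × Bool)) (x : NF k) :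
    phi (evalWord y) x = y.foldr step x := by
  induction y with
  | nil => rw [evalWord_nil, map_one]; rfl
  | cons p t ih =>
    rw [evalWord_cons, map_mul, Equiv.Perm.mul_apply, ih, List.foldr_cons, phi_letter]

lemma state_eq {y y' : List (Fin k × Bool)} (h : evalWord y = evalWord y') :
    stW y = stW y' := by
  unfold stW
  rw [← phi_evalWord, ← phi_evalWord, h]

/-- The counting lemma: for any word, the length is the state's list length plus twice
the (nonnegative) number of `δ`-merges. -/
lemma counting (y : List (Fin k × Bool)) :
    (y.length : ℤ) = (stW y).l.length + 2 * ((stW y).r + negC y) ∧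
      0 ≤ (stW y).r + negC y := by
  induction y with
  | nil => simp [stW, base, negC]
  | cons p t ih =>
    have hst : stW (p :: t) = step p (stW t) := rfl
    obtain ⟨ih1, ih2⟩ := ih
    rcases p with ⟨i, b⟩
    rcases hxe : stW t with ⟨r, l, hch⟩
    rw [hxe] at ih1 ih2
    simp only [] at ih1 ih2
    rw [hxe] at hst
    cases b
    · have hn : (negC ((i, false) :: t) : ℤ) = negC t + 1 := by
        simp [negC, List.countP_cons]
      replace hst : stW ((i, false) :: t) = negAct i ⟨r, l, hch⟩ := hst
      rcases l with _ | ⟨a, m⟩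
      · rw [negAct] at hst
        rw [hst]
        simp only [List.length_cons, List.length_nil] at ih1 ⊢
        push_cast
        constructor <;> [omega; omega]
      · rw [negAct] at hst
        split_ifs at hst with hc
        · rw [hst]
          simp only [List.length_cons] at ih1 ⊢
          push_cast at ih1 ⊢
          rw [hn]
          constructor <;> omega
        · rw [hst]
          simp only [List.length_cons] at ih1 ⊢
          push_cast at ih1 ⊢
          rw [hn]
          constructor <;> omega
    · have hn : (negC ((i, true) :: t) : ℤ) = negC t := by
        simp [negC, List.countP_cons]
      replace hst : stW ((i, true) :: t) = posAct i ⟨r, l, hch⟩ := hst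
      rcases l with _ | ⟨a, m⟩
      · rw [posAct] at hst
        rw [hst]
        simp only [List.length_cons, List.length_nil] at ih1 ⊢
        push_cast
        rw [hn]
        constructor <;> omega
      · rw [posAct] at hst
        split_ifs at hst with hc
        · rw [hst]
          simp only [List.length_cons] at ih1 ⊢
          push_cast at ih1 ⊢
          rw [hn]
          constructor <;> omega
        · rw [hst]
          simp only [List.length_cons] at ih1 ⊢
          push_cast at ih1 ⊢
          rw [hn]
          constructor <;> omega

/-- For a freely reduced word with no two-letter infix equal to `δ` or `δ⁻¹`, the state
machine never merges or cancels. -/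
lemma noMerge (y : List (Fin k × Bool)) (hred : FreelyReduced y)
    (hP : ∀ a : Fin k, ¬ [(a, true), (a + 1, true)].IsInfix y)
    (hN : ∀ a : Fin k, ¬ [(a + 1, false), (a, false)].IsInfix y) :
    (stW y).r = -(negC y : ℤ) ∧ (stW y).l.length = y.length ∧
      ∀ p ∈ y.head?, (stW y).l.head? =
        some (jdx p.1 (stW y).r + (if p.2 then 0 else 1)) := by
  induction y with
  | nil => simp [stW, base, negC]
  | cons p t ih =>
    have hredt : FreelyReduced t := by
      have := (List.isChain_cons.mp hred).2
      exact this
    have hPt : ∀ a : Fin k, ¬ [(a, true), (a + 1, true)].IsInfix t := fun a hinf =>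
      hP a (hinf.trans (List.suffix_cons _ _).isInfix)
    have hNt : ∀ a : Fin k, ¬ [(a + 1, false), (a, false)].IsInfix t := fun a hinf =>
      hN a (hinf.trans (List.suffix_cons _ _).isInfix)
    obtain ⟨ih1, ih2, ih3⟩ := ih hredt hPt hNt
    have hst : stW (p :: t) = step p (stW t) := rfl
    rcases p with ⟨i, b⟩
    rcases ht : t with _ | ⟨q, t'⟩
    · -- t = []
      subst ht
      have hbase : stW ([] : List (Fin k × Bool)) = base k := rfl
      rw [hbase] at hst
      cases b
      · replace hst : stW [((i : Fin k), false)] = negAct i (base k) := hst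
        rw [show negAct i (base k) = ⟨-1, [jdx i 0 - 1], List.isChain_singleton _⟩ from by
          rw [base, negAct]; exact NF.ext' (by ring) rfl] at hst
        rw [hst]
        refine ⟨by simp [negC, List.countP_cons], by simp, ?_⟩
        rintro p hp
        simp only [List.head?_cons, Option.mem_some_iff] at hp
        subst hp
        simp only [List.head?_cons, Option.some.injEq, if_neg Bool.false_ne_true]
        unfold jdx; simp only [zsmul_eq_mul]; push_cast; ring
      · replace hst : stW [((i : Fin k), true)] = posAct i (base k) := hst
        rw [show posAct i (base k) = ⟨0, [jdx i 0], List.isChain_singleton _⟩ from by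
          rw [base, posAct]] at hst
        rw [hst]
        refine ⟨by simp [negC, List.countP_cons], by simp, ?_⟩
        rintro p hp
        simp only [List.head?_cons, Option.mem_some_iff] at hp
        subst hp
        simp
    · -- t = q :: t'
      rcases hxe : stW t with ⟨r, l, hch⟩
      rw [hxe] at ih1 ih2 ih3 hst
      simp only [] at ih1 ih2 ih3
      have hq : l.head? = some (jdx q.1 r + (if q.2 then 0 else 1)) := by
        exact ih3 q (by rw [ht]; rfl)
      rcases l with _ | ⟨a, m⟩
      · simp at hq
      have ha : a = jdx q.1 r + (if q.2 then 0 else 1) := by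
        simpa using hq
      have hfr : ¬(q.1 = i ∧ q.2 = !b) := by
        rw [ht] at hred
        exact (List.isChain_cons_cons.mp hred).1
      cases b
      · -- negative letter; cancellation is impossible
        replace hst : stW (((i : Fin k), false) :: t) = negAct i ⟨r, a :: m, hch⟩ := hst
        have hc : a ≠ jdx i r := by
          intro he
          rw [ha] at he
          have := jdx_cancel (c := (if q.2 then 0 else 1)) (d := 0)
            (by rw [he]; exact (add_zero _).symm)
          rcases hqb : q.2 with _ | _
          · -- q negative : pattern δ⁻¹
            rw [hqb] at this
            simp at this
            have hqq : q = (q.1, false) := by rw [← hqb]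
            apply hN q.1
            rw [ht, this]
            exact ⟨[], t', by rw [hqq]; rfl⟩
          · -- q positive, same index : not freely reduced
            rw [hqb] at this
            simp at this
            exact hfr ⟨this, by rw [hqb]; rfl⟩
        rw [negAct, dif_neg hc] at hst
        rw [← ht, hst]
        refine ⟨by simp [negC, List.countP_cons] at ih1 ⊢; omega, by simp [← ih2], ?_⟩
        rintro p hp
        simp only [List.head?_cons, Option.mem_some_iff] at hp
        subst hp
        simp only [List.head?_cons, Option.some.injEq, if_neg Bool.false_ne_true]
        unfold jdx; simp only [zsmul_eq_mul]; push_cast; ring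
      · -- positive letter; merging is impossible
        replace hst : stW (((i : Fin k), true) :: t) = posAct i ⟨r, a :: m, hch⟩ := hst
        have hc : a ≠ jdx i r + 1 := by
          intro he
          rw [ha] at he
          have := jdx_cancel (c := (if q.2 then 0 else 1)) (d := 1) he
          rcases hqb : q.2 with _ | _
          · -- q negative, same index : not freely reduced
            rw [hqb] at this
            simp at this
            exact hfr ⟨this, by rw [hqb]; rfl⟩
          · -- q positive : pattern δ
            rw [hqb] at this
            simp at this
            have hqq : q = (q.1, true) := by rw [← hqb]
            apply hP i
            rw [ht, ← this]
            exact ⟨[], t', by rw [hqq]; rfl⟩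
        rw [posAct, dif_neg hc] at hst
        rw [← ht, hst]
        refine ⟨by simpa [negC, List.countP_cons] using ih1, by simp [← ih2], ?_⟩
        rintro p hp
        simp only [List.head?_cons, Option.mem_some_iff] at hp
        subst hp
        simp

/-! ### Word length -/

lemma letter_mem_gens (p : Fin k × Bool) : letter p ∈ dualGens k := by
  rcases p with ⟨i, b⟩
  cases b
  · exact ⟨i, Or.inr rfl⟩
  · exact ⟨i, Or.inl rfl⟩

lemma exists_word_of_list (l : List (DualArtin k)) (h : ∀ g ∈ l, g ∈ dualGens k) :
    ∃ y : List (Fin k × Bool), y.length = l.length ∧ evalWord y = l.prod := by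
  induction l with
  | nil => exact ⟨[], rfl, rfl⟩
  | cons g t ih =>
    obtain ⟨y, hy1, hy2⟩ := ih fun g hg => h g (List.mem_cons_of_mem _ hg)
    obtain ⟨i, hi | hi⟩ := h g (List.mem_cons_self)
    · exact ⟨(i, true) :: y, by simp [hy1], by
        rw [evalWord_cons, hy2, List.prod_cons, hi]; rfl⟩
    · exact ⟨(i, false) :: y, by simp [hy1], by
        rw [evalWord_cons, hy2, List.prod_cons, hi]; rfl⟩

lemma wordLength_le (y : List (Fin k × Bool)) :
    wordLength (dualGens k) (evalWord y) ≤ y.length :=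
  Nat.sInf_le ⟨y.map letter, by simp, fun g hg => by
    obtain ⟨p, _, rfl⟩ := List.mem_map.mp hg; exact letter_mem_gens p, rfl⟩

lemma geodesic_iff (y : List (Fin k × Bool)) :
    IsGeodesicWord y ↔ ∀ y' : List (Fin k × Bool),
      evalWord y' = evalWord y → y.length ≤ y'.length := by
  constructor
  · intro hg y' he
    have h1 : wordLength (dualGens k) (evalWord y) ≤ y'.length := he ▸ wordLength_le y'
    rw [IsGeodesicWord] at hg
    omega
  · intro h
    refine le_antisymm (wordLength_le y) ?_
    have hne : {n | ∃ l : List (DualArtin k), l.length = n ∧ (∀ g ∈ l, g ∈ dualGens k) ∧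
        l.prod = evalWord y}.Nonempty :=
      ⟨y.length, y.map letter, by simp, fun g hg => by
        obtain ⟨p, _, rfl⟩ := List.mem_map.mp hg; exact letter_mem_gens p, rfl⟩
    rw [wordLength]
    apply le_csInf hne
    rintro n ⟨l, hl, hgen, hprod⟩
    obtain ⟨y', hy1, hy2⟩ := exists_word_of_list l hgen
    calc y.length ≤ y'.length := h y' (by rw [hy2, hprod])
      _ = n := by rw [hy1, hl]

lemma not_geodesic_of_shorter {y z : List (Fin k × Bool)}
    (he : evalWord z = evalWord y) (hlt : z.length < y.length) : ¬ IsGeodesicWord y := by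
  intro hg
  exact absurd ((geodesic_iff y).mp hg z he) (by omega)

/-! ### `dualPoss` and `dualNegg` -/

/-- the set whose supremum is `dualPoss` -/
def PSet (y : List (Fin k × Bool)) : Set ℕ :=
  {0} ∪ {n | ∃ u : List (Fin k × Bool), u ≠ [] ∧ u.IsInfix y ∧
    ((n = 1 ∧ ∃ j : Fin k, evalWord u = sig j) ∨ (n = 2 ∧ evalWord u = dualDelta k))}

/-- the set whose supremum is `dualNegg` -/
def NSet (y : List (Fin k × Bool)) : Set ℕ :=
  {0} ∪ {n | ∃ u : List (Fin k × Bool), u ≠ [] ∧ u.IsInfix y ∧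
    ((n = 1 ∧ ∃ j : Fin k, evalWord u = (sig j)⁻¹) ∨ (n = 2 ∧ evalWord u = (dualDelta k)⁻¹))}

lemma dualPoss_eq (y : List (Fin k × Bool)) : dualPoss y = sSup (PSet y) := rfl

lemma dualNegg_eq (y : List (Fin k × Bool)) : dualNegg y = sSup (NSet y) := rfl

lemma pset_sub (y : List (Fin k × Bool)) : PSet y ⊆ Set.Iic 2 := by
  rintro n (hn | ⟨u, _, _, (⟨rfl, _⟩ | ⟨rfl, _⟩)⟩)
  · simp only [Set.mem_singleton_iff] at hn; simp [hn]
  · simp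
  · simp

lemma nset_sub (y : List (Fin k × Bool)) : NSet y ⊆ Set.Iic 2 := by
  rintro n (hn | ⟨u, _, _, (⟨rfl, _⟩ | ⟨rfl, _⟩)⟩)
  · simp only [Set.mem_singleton_iff] at hn; simp [hn]
  · simp
  · simp

lemma poss_bdd (y : List (Fin k × Bool)) : BddAbove (PSet y) :=
  ⟨2, fun n hn => pset_sub y hn⟩

lemma negg_bdd (y : List (Fin k × Bool)) : BddAbove (NSet y) :=
  ⟨2, fun n hn => nset_sub y hn⟩

lemma poss_le_two (y : List (Fin k × Bool)) : dualPoss y ≤ 2 := by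
  rw [dualPoss_eq]
  exact csSup_le ⟨0, Or.inl rfl⟩ fun n hn => pset_sub y hn

lemma negg_le_two (y : List (Fin k × Bool)) : dualNegg y ≤ 2 := by
  rw [dualNegg_eq]
  exact csSup_le ⟨0, Or.inl rfl⟩ fun n hn => nset_sub y hn

lemma le_poss {y : List (Fin k × Bool)} {n : ℕ} (h : n ∈ PSet y) : n ≤ dualPoss y :=
  le_csSup (poss_bdd y) h

lemma le_negg {y : List (Fin k × Bool)} {n : ℕ} (h : n ∈ NSet y) : n ≤ dualNegg y :=
  le_csSup (negg_bdd y) h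

lemma poss_mem (y : List (Fin k × Bool)) : dualPoss y ∈ PSet y := by
  rw [dualPoss_eq]
  exact Nat.sSup_mem ⟨0, Or.inl rfl⟩ (poss_bdd y)

lemma negg_mem (y : List (Fin k × Bool)) : dualNegg y ∈ NSet y := by
  rw [dualNegg_eq]
  exact Nat.sSup_mem ⟨0, Or.inl rfl⟩ (negg_bdd y)

/-! ### Shortening words containing `δ` and a negative letter -/

lemma delta_absorb_right (z₁ z₂ : List (Fin k × Bool)) (j : Fin k) :
    dualDelta k * evalWord (z₁ ++ (j, false) :: z₂) =
      evalWord (shW (-2) z₁ ++ (j - 1, true) :: z₂) := by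
  rw [evalWord_append, ← mul_assoc, delta_mul_evalWord, evalWord_cons, evalWord_append,
    evalWord_cons]
  have h1 : letter ((j, false) : Fin k × Bool) = (sig j)⁻¹ := rfl
  have h2 : letter ((j - 1, true) : Fin k × Bool) = sig (j - 1) := rfl
  rw [h1, h2, mul_assoc, ← mul_assoc (dualDelta k), delta_mul_sig_inv, ← mul_assoc]

lemma delta_absorb_left (z₁ z₂ : List (Fin k × Bool)) (j : Fin k) :
    evalWord (z₁ ++ (j, false) :: z₂) * dualDelta k =
      evalWord (z₁ ++ (j + 1, true) :: shW 2 z₂) := by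
  rw [evalWord_append, evalWord_cons, evalWord_append, evalWord_cons]
  have h1 : letter ((j, false) : Fin k × Bool) = (sig j)⁻¹ := rfl
  have h2 : letter ((j + 1, true) : Fin k × Bool) = sig (j + 1) := rfl
  rw [h1, h2, mul_assoc, mul_assoc, evalWord_mul_delta, ← mul_assoc (sig j)⁻¹,
    sig_inv_mul_delta]

lemma negC_pos_of_mem {y : List (Fin k × Bool)} {j : Fin k} (h : (j, false) ∈ y) :
    1 ≤ negC y := by
  rw [negC]
  exact List.countP_pos_iff.mpr ⟨(j, false), h, by simp⟩

lemma eH_delta : eH (dualDelta k) = Multiplicative.ofAdd (2 : ℤ) := by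
  rw [dualDelta, map_mul, eH_sig, eH_sig, ← ofAdd_add]
  norm_num

lemma counts_of_eval_delta {u : List (Fin k × Bool)} (h : evalWord u = dualDelta k) :
    (posC u : ℤ) - negC u = 2 := by
  have h1 := eH_evalWord u
  rw [h, eH_delta] at h1
  exact (Multiplicative.ofAdd.injective h1).symm

lemma neg_letter_of_eH {u : List (Fin k × Bool)} (h : (posC u : ℤ) - negC u < 0) :
    ∃ j : Fin k, (j, false) ∈ u := by
  by_contra hno
  push_neg at hno
  have h0 : negC u = 0 := by
    rw [negC, List.countP_eq_zero]
    rintro ⟨j, b⟩ hp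
    cases b
    · exact absurd hp (hno j)
    · simp
  omega

/-- Main shortening lemma: a word with an infix equal to `δ` and a negative letter
is not geodesic. -/
lemma not_geodesic_main {y u : List (Fin k × Bool)} (hne : u ≠ []) (hinf : u.IsInfix y)
    (hev : evalWord u = dualDelta k) (hneg : ∃ j : Fin k, (j, false) ∈ y) :
    ¬ IsGeodesicWord y := by
  obtain ⟨y₁, y₂, rfl⟩ := hinf
  by_cases hcu : ∃ j : Fin k, (j, false) ∈ u
  · -- `u` contains a negative letter, so `|u| ≥ 4 > 2`; replace `u` by `σ₀σ₁`
    obtain ⟨j, hj⟩ := hcu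
    have h1 : (posC u : ℤ) - negC u = 2 := counts_of_eval_delta hev
    have h2 : 1 ≤ negC u := negC_pos_of_mem hj
    have h3 : posC u + negC u = u.length := posC_add_negC u
    have hdel : evalWord (((0 : Fin k), true) :: ((1 : Fin k), true) :: y₂)
        = dualDelta k * evalWord y₂ := by
      rw [evalWord_cons, evalWord_cons, ← mul_assoc]
      rfl
    refine not_geodesic_of_shorter
      (z := y₁ ++ ((0 : Fin k), true) :: ((1 : Fin k), true) :: y₂) ?_ ?_
    · rw [evalWord_append, hdel, evalWord_append, evalWord_append, hev, mul_assoc]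
    · simp only [List.length_append, List.length_cons]
      omega
  · -- the negative letter is outside `u`
    push_neg at hcu
    obtain ⟨j, hj⟩ := hneg
    have hu1 : 1 ≤ u.length := List.length_pos_iff.mpr hne
    rcases List.mem_append.mp hj with hj1 | hj2
    swap
    · -- negative letter in `y₂`
      obtain ⟨z₁, z₂, rfl⟩ := List.mem_iff_append.mp hj2
      have hL : evalWord (y₁ ++ (shW (-2) z₁ ++ (j - 1, true) :: z₂))
          = evalWord y₁ * (dualDelta k * evalWord (z₁ ++ (j, false) :: z₂)) := by
        rw [evalWord_append, delta_absorb_right]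
      have hR : evalWord ((y₁ ++ u) ++ (z₁ ++ (j, false) :: z₂))
          = evalWord y₁ * (dualDelta k * evalWord (z₁ ++ (j, false) :: z₂)) := by
        rw [evalWord_append, evalWord_append, hev, mul_assoc]
      refine not_geodesic_of_shorter (z := y₁ ++ (shW (-2) z₁ ++ (j - 1, true) :: z₂))
        (hL.trans hR.symm) ?_
      simp only [List.length_append, List.length_cons, shW_length]
      omega
    rcases List.mem_append.mp hj1 with hj1 | hju
    swap
    · exact absurd hju (hcu j)
    · -- negative letter in `y₁`
      obtain ⟨z₁, z₂, rfl⟩ := List.mem_iff_append.mp hj1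
      have hL : evalWord ((z₁ ++ (j + 1, true) :: shW 2 z₂) ++ y₂)
          = evalWord (z₁ ++ (j, false) :: z₂) * dualDelta k * evalWord y₂ := by
        rw [evalWord_append, ← delta_absorb_left]
      have hR : evalWord (((z₁ ++ (j, false) :: z₂) ++ u) ++ y₂)
          = evalWord (z₁ ++ (j, false) :: z₂) * dualDelta k * evalWord y₂ := by
        rw [evalWord_append, evalWord_append, hev]
      refine not_geodesic_of_shorter (z := (z₁ ++ (j + 1, true) :: shW 2 z₂) ++ y₂)
        (hL.trans hR.symm) ?_
      simp only [List.length_append, List.length_cons, shW_length]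
      omega

/-! ### The inverse word -/

/-- formal inverse of a word -/
def invW (y : List (Fin k × Bool)) : List (Fin k × Bool) :=
  (y.map fun p => (p.1, !p.2)).reverse

@[simp] lemma invW_length (y : List (Fin k × Bool)) : (invW y).length = y.length := by
  simp [invW]

lemma invW_ne_nil {y : List (Fin k × Bool)} (h : y ≠ []) : invW y ≠ [] := by
  intro hc
  apply h
  have := congrArg List.length hc
  simp at this
  exact this

lemma letter_not (p : Fin k × Bool) : letter ((p.1, !p.2) : Fin k × Bool) = (letter p)⁻¹ := by
  rcases p with ⟨i, b⟩
  cases b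
  · show letter (i, true) = (letter (i, false))⁻¹
    show sig i = ((sig i)⁻¹)⁻¹
    rw [inv_inv]
  · rfl

lemma invW_append (a b : List (Fin k × Bool)) : invW (a ++ b) = invW b ++ invW a := by
  simp [invW]

lemma evalWord_invW (y : List (Fin k × Bool)) : evalWord (invW y) = (evalWord y)⁻¹ := by
  induction y with
  | nil => rfl
  | cons p t ih =>
    have h1 : invW (p :: t) = invW t ++ [(p.1, !p.2)] := by simp [invW]
    rw [h1, evalWord_append, evalWord_singleton, letter_not, ih, evalWord_cons, mul_inv_rev]

lemma invW_infix {u y : List (Fin k × Bool)} (h : u.IsInfix y) : (invW u).IsInfix (invW y) := by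
  obtain ⟨s, t, rfl⟩ := h
  rw [invW_append, invW_append]
  exact ⟨invW t, invW s, by rw [List.append_assoc]⟩

lemma mem_invW_of {y : List (Fin k × Bool)} {j : Fin k} (h : (j, true) ∈ y) :
    ((j, false) : Fin k × Bool) ∈ invW y := by
  rw [invW, List.mem_reverse, List.mem_map]
  exact ⟨(j, true), h, rfl⟩

lemma gens_inv {g : DualArtin k} (h : g ∈ dualGens k) : g⁻¹ ∈ dualGens k := by
  obtain ⟨i, hi | hi⟩ := h
  · exact ⟨i, Or.inr (by rw [hi])⟩
  · exact ⟨i, Or.inl (by rw [hi, inv_inv])⟩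

lemma wordLength_set_sub (w : DualArtin k) :
    {n | ∃ l : List (DualArtin k), l.length = n ∧ (∀ g ∈ l, g ∈ dualGens k) ∧ l.prod = w} ⊆
    {n | ∃ l : List (DualArtin k), l.length = n ∧ (∀ g ∈ l, g ∈ dualGens k) ∧ l.prod = w⁻¹} := by
  rintro n ⟨l, hl, hgen, hprod⟩
  refine ⟨(l.map Inv.inv).reverse, by simp [hl], ?_, ?_⟩
  · intro g hg
    rw [List.mem_reverse, List.mem_map] at hg
    obtain ⟨g', hg', rfl⟩ := hg
    exact gens_inv (hgen g' hg')
  · rw [← List.prod_inv_reverse, hprod]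

lemma wordLength_inv (w : DualArtin k) :
    wordLength (dualGens k) w⁻¹ = wordLength (dualGens k) w := by
  unfold wordLength
  congr 1
  apply Set.Subset.antisymm
  · have := wordLength_set_sub (k := k) w⁻¹
    rwa [inv_inv] at this
  · exact wordLength_set_sub w

lemma geodesic_invW {y : List (Fin k × Bool)} : IsGeodesicWord (invW y) ↔ IsGeodesicWord y := by
  unfold IsGeodesicWord
  rw [evalWord_invW, wordLength_inv, invW_length]

/-! ### letters and counts -/

lemma singleton_infix {y : List (Fin k × Bool)} {p : Fin k × Bool} (h : p ∈ y) :
    [p].IsInfix y := by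
  obtain ⟨s, t, rfl⟩ := List.mem_iff_append.mp h
  exact ⟨s, t, by simp⟩

lemma counts_eq_of_eval {u : List (Fin k × Bool)} {m : ℤ}
    (h : eH (evalWord u) = Multiplicative.ofAdd m) : (posC u : ℤ) - negC u = m :=
  Multiplicative.ofAdd.injective ((eH_evalWord u).symm.trans h)

lemma pos_letter_of_eH {u : List (Fin k × Bool)} (h : 0 < (posC u : ℤ) - negC u) :
    ∃ j : Fin k, (j, true) ∈ u := by
  by_contra hno
  push_neg at hno
  have h0 : posC u = 0 := by
    rw [posC, List.countP_eq_zero]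
    rintro ⟨j, b⟩ hp
    cases b
    · simp
    · exact absurd hp (hno j)
  omega

lemma eH_delta_inv : eH (dualDelta k)⁻¹ = Multiplicative.ofAdd (-2 : ℤ) := by
  rw [map_inv, eH_delta, ← ofAdd_neg]

lemma eH_sig_inv (j : Fin k) : eH (sig j)⁻¹ = Multiplicative.ofAdd (-1 : ℤ) := by
  rw [map_inv, eH_sig, ← ofAdd_neg]

/-- a word whose `NSet`-witness shows `dualNegg ≥ 1` contains a negative letter -/
lemma neg_letter_of_witness {y u : List (Fin k × Bool)} (hinf : u.IsInfix y)
    (h : (∃ j : Fin k, evalWord u = (sig j)⁻¹) ∨ evalWord u = (dualDelta k)⁻¹) :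
    ∃ j : Fin k, (j, false) ∈ y := by
  have hneg : (posC u : ℤ) - negC u < 0 := by
    rcases h with ⟨j, hj⟩ | hd
    · rw [counts_eq_of_eval (by rw [hj, eH_sig_inv])]; norm_num
    · rw [counts_eq_of_eval (by rw [hd, eH_delta_inv])]; norm_num
  obtain ⟨j, hj⟩ := neg_letter_of_eH hneg
  exact ⟨j, hinf.subset hj⟩

lemma pos_letter_of_witness {y u : List (Fin k × Bool)} (hinf : u.IsInfix y)
    (h : (∃ j : Fin k, evalWord u = sig j) ∨ evalWord u = dualDelta k) :
    ∃ j : Fin k, (j, true) ∈ y := by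
  have hpos : 0 < (posC u : ℤ) - negC u := by
    rcases h with ⟨j, hj⟩ | hd
    · rw [counts_eq_of_eval (by rw [hj, eH_sig])]; norm_num
    · rw [counts_eq_of_eval (by rw [hd, eH_delta])]; norm_num
  obtain ⟨j, hj⟩ := pos_letter_of_eH hpos
  exact ⟨j, hinf.subset hj⟩

lemma eval_pospair (a : Fin k) :
    evalWord [(a, true), (a + 1, true)] = dualDelta k := by
  rw [evalWord_cons, evalWord_singleton]
  show sig a * sig (a + 1) = _
  exact rel_eq a

lemma eval_negpair (a : Fin k) :
    evalWord [(a + 1, false), (a, false)] = (dualDelta k)⁻¹ := by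
  rw [evalWord_cons, evalWord_singleton]
  show (sig (a + 1))⁻¹ * (sig a)⁻¹ = _
  rw [← mul_inv_rev, rel_eq a]

end DG


theorem dual_geodesic_criterion (k : ℕ) [NeZero k] (hk : 3 ≤ k)
    (y : List (Fin k × Bool)) (hy : FreelyReduced y) :
    IsGeodesicWord y ↔ dualPoss y + dualNegg y ≤ 2 := by
  constructor
  · -- geodesic → small
    intro hgeo
    by_contra hbig
    push_neg at hbig
    have hP2 := DG.poss_le_two y
    have hN2 := DG.negg_le_two y
    have hsplit : (2 ≤ dualPoss y ∧ 1 ≤ dualNegg y) ∨ (1 ≤ dualPoss y ∧ 2 ≤ dualNegg y) := by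
      omega
    rcases hsplit with ⟨hP, hN⟩ | ⟨hP, hN⟩
    · -- δ infix and negative letter
      rcases DG.poss_mem y with h0 | ⟨u, hune, huinf, hu⟩
      · simp only [Set.mem_singleton_iff] at h0; omega
      rcases hu with ⟨h1, _⟩ | ⟨_, hev⟩
      · omega
      rcases DG.negg_mem y with h0 | ⟨v, hvne, hvinf, hv⟩
      · simp only [Set.mem_singleton_iff] at h0; omega
      have hneg : ∃ j : Fin k, (j, false) ∈ y := by
        rcases hv with ⟨_, hj⟩ | ⟨_, hd⟩
        · exact DG.neg_letter_of_witness hvinf (Or.inl hj)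
        · exact DG.neg_letter_of_witness hvinf (Or.inr hd)
      exact DG.not_geodesic_main hune huinf hev hneg hgeo
    · -- δ⁻¹ infix and positive letter: pass to the inverse word
      rcases DG.negg_mem y with h0 | ⟨u, hune, huinf, hu⟩
      · simp only [Set.mem_singleton_iff] at h0; omega
      rcases hu with ⟨h1, _⟩ | ⟨_, hev⟩
      · omega
      rcases DG.poss_mem y with h0 | ⟨v, hvne, hvinf, hv⟩
      · simp only [Set.mem_singleton_iff] at h0; omega
      have hpos : ∃ j : Fin k, (j, true) ∈ y := by
        rcases hv with ⟨_, hj⟩ | ⟨_, hd⟩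
        · exact DG.pos_letter_of_witness hvinf (Or.inl hj)
        · exact DG.pos_letter_of_witness hvinf (Or.inr hd)
      obtain ⟨j, hj⟩ := hpos
      have hginv : ¬ IsGeodesicWord (DG.invW y) := by
        apply DG.not_geodesic_main (u := DG.invW u) (DG.invW_ne_nil hune) (DG.invW_infix huinf)
        · rw [DG.evalWord_invW, hev, inv_inv]
        · exact ⟨j, DG.mem_invW_of hj⟩
      exact hginv (DG.geodesic_invW.mpr hgeo)
  · -- small → geodesic
    intro hsmall
    apply (DG.geodesic_iff y).mpr
    intro y' he
    have hstE : DG.stW y' = DG.stW y := DG.state_eq he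
    obtain ⟨hc1, hc2⟩ := DG.counting y
    obtain ⟨hc1', hc2'⟩ := DG.counting y'
    rw [hstE] at hc1' hc2'
    by_cases hyneg : DG.negC y = 0
    · -- all positive
      omega
    by_cases hypos : DG.posC y = 0
    · -- all negative
      have hlen := DG.posC_add_negC y
      have hlen' : DG.negC y' ≤ y'.length := List.countP_le_length
      omega
    · -- mixed word
      have hxp : ∃ j : Fin k, (j, true) ∈ y := by
        have hpc : 0 < DG.posC y := Nat.pos_of_ne_zero hypos
        rw [DG.posC] at hpc
        obtain ⟨p, hp, hp2⟩ := List.countP_pos_iff.mp hpc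
        rcases p with ⟨j, b⟩
        cases b
        · simp at hp2
        · exact ⟨j, hp⟩
      have hxn : ∃ j : Fin k, (j, false) ∈ y := by
        have hpc : 0 < DG.negC y := Nat.pos_of_ne_zero hyneg
        rw [DG.negC] at hpc
        obtain ⟨p, hp, hp2⟩ := List.countP_pos_iff.mp hpc
        rcases p with ⟨j, b⟩
        cases b
        · exact ⟨j, hp⟩
        · simp at hp2
      obtain ⟨jp, hjp⟩ := hxp
      obtain ⟨jn, hjn⟩ := hxn
      have h1P : 1 ≤ dualPoss y :=
        DG.le_poss (Or.inr ⟨[(jp, true)], by simp, DG.singleton_infix hjp,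
          Or.inl ⟨rfl, jp, by rw [DG.evalWord_singleton]; rfl⟩⟩)
      have h1N : 1 ≤ dualNegg y :=
        DG.le_negg (Or.inr ⟨[(jn, false)], by simp, DG.singleton_infix hjn,
          Or.inl ⟨rfl, jn, by rw [DG.evalWord_singleton]; rfl⟩⟩)
      have hPat1 : ∀ a : Fin k, ¬ [(a, true), (a + 1, true)].IsInfix y := by
        intro a hinf
        have h2 : 2 ≤ dualPoss y :=
          DG.le_poss (Or.inr ⟨_, by simp, hinf, Or.inr ⟨rfl, DG.eval_pospair a⟩⟩)
        omega
      have hPat2 : ∀ a : Fin k, ¬ [(a + 1, false), (a, false)].IsInfix y := by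
        intro a hinf
        have h2 : 2 ≤ dualNegg y :=
          DG.le_negg (Or.inr ⟨_, by simp, hinf, Or.inr ⟨rfl, DG.eval_negpair a⟩⟩)
        omega
      obtain ⟨hr, hs, -⟩ := DG.noMerge y hy hPat1 hPat2
      omega
end

section
/- Every word in the positive dual generators {σ₁,…,σ_k} of the dihedral Artin group A_k (that is, a word with no negative letters) is a geodesic word with respect to the dual generating set {σ₁^{±1},…,σ_k^{±1}}. -/
section LenHom
variable {k : ℕ} [NeZero k]

lemma dualRels_lift : ∀ r ∈ DualRels k,
    FreeGroup.lift (fun _ : Fin k => Multiplicative.ofAdd (1:ℤ)) r = 1 := by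
  rintro r ⟨i, rfl⟩
  simp only [map_mul, map_inv, FreeGroup.lift_apply_of]
  group

/-- The length homomorphism sending each `σᵢ` to `1 ∈ ℤ`. -/
def lenHom (k : ℕ) [NeZero k] : DualArtin k →* Multiplicative ℤ :=
  PresentedGroup.toGroup dualRels_lift

lemma lenHom_sig (i : Fin k) : lenHom k (sig i) = Multiplicative.ofAdd (1:ℤ) :=
  PresentedGroup.toGroup.of dualRels_lift

lemma abs_lenHom_le (l : List (DualArtin k)) (hl : ∀ g ∈ l, g ∈ dualGens k) :
    |Multiplicative.toAdd (lenHom k l.prod)| ≤ (l.length : ℤ) := by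
  induction l with
  | nil => simp
  | cons g t ih =>
    have hg : |Multiplicative.toAdd (lenHom k g)| = 1 := by
      obtain ⟨i, hi | hi⟩ := hl g (List.mem_cons_self) <;>
        simp [hi, lenHom_sig]
    have ht := ih (fun x hx => hl x (List.mem_cons_of_mem _ hx))
    have : Multiplicative.toAdd (lenHom k (g :: t).prod)
        = Multiplicative.toAdd (lenHom k g) + Multiplicative.toAdd (lenHom k t.prod) := by
      simp [List.prod_cons]
    rw [this]
    calc |Multiplicative.toAdd (lenHom k g) + Multiplicative.toAdd (lenHom k t.prod)|
        ≤ |Multiplicative.toAdd (lenHom k g)| + |Multiplicative.toAdd (lenHom k t.prod)| :=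
          abs_add_le _ _
      _ ≤ 1 + t.length := by rw [hg]; exact (add_le_add_iff_left 1).2 ht
      _ = ((g :: t).length : ℤ) := by simp [add_comm]

lemma lenHom_pos (y : List (Fin k × Bool)) (hpos : ∀ p ∈ y, p.2 = true) :
    Multiplicative.toAdd (lenHom k (evalWord y)) = (y.length : ℤ) := by
  induction y with
  | nil => simp [evalWord]
  | cons p t ih =>
    have hp := hpos p (List.mem_cons_self)
    have ht := ih (fun q hq => hpos q (List.mem_cons_of_mem _ hq))
    have : evalWord (p :: t) = sig p.1 * evalWord t := by
      simp [evalWord, hp]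
    rw [this]
    simp only [map_mul, toAdd_mul, lenHom_sig, toAdd_ofAdd, ht]
    push_cast [List.length_cons]
    ring

end LenHom

theorem positive_words_are_geodesic (k : ℕ) [NeZero k] (hk : 3 ≤ k)
    (y : List (Fin k × Bool)) (hpos : ∀ p ∈ y, p.2 = true) :
    IsGeodesicWord y := by
  unfold IsGeodesicWord wordLength
  have hmem : y.length ∈ {n | ∃ l : List (DualArtin k), l.length = n ∧
      (∀ g ∈ l, g ∈ dualGens k) ∧ l.prod = evalWord y} := by
    refine ⟨y.map fun p => sig p.1, by simp, ?_, ?_⟩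
    · intro g hg
      obtain ⟨p, hp, rfl⟩ := List.mem_map.1 hg
      exact ⟨p.1, Or.inl rfl⟩
    · unfold evalWord
      congr 1
      apply List.map_congr_left
      intro p hp
      simp [hpos p hp]
  apply le_antisymm (Nat.sInf_le hmem)
  apply le_csInf ⟨_, hmem⟩
  rintro n ⟨l, rfl, hl, hprod⟩
  have h1 := abs_lenHom_le l hl
  rw [hprod, lenHom_pos y hpos] at h1
  exact_mod_cast le_trans (le_abs_self _) h1
end

section
/- Let k ≥ 3 and let a_n denote the number of geodesic words of length n in the dual generators {σ₁^{±1},…,σ_k^{±1}} of the dihedral Artin group A_k. Then for n ≥ 1, a_n = 2kⁿ + 2k(2k−2)^{n−1} − 2k(k−1)^{n−1}, and the geodesic growth series Σ a_n xⁿ equals (1+(3−2k)x+(2+k²−3k)x²−2k(k−1)x³) / ((1−kx)(1−2(k−1)x)(1−(k−1)x)). -/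
namespace DualGeo

variable {k : ℕ} [NeZero k]

/-- from `ZMod k` to `Fin k`. -/
def tF (z : ZMod k) : Fin k := ⟨z.val, ZMod.val_lt z⟩

/-- from `Fin k` to `ZMod k`. -/
def cF (i : Fin k) : ZMod k := (i.val : ZMod k)

lemma tF_cF (i : Fin k) : tF (cF i) = i := by
  obtain ⟨m, rfl⟩ : ∃ m, k = m + 1 := ⟨k - 1, (Nat.succ_pred_eq_of_ne_zero (NeZero.ne k)).symm⟩
  ext
  exact ZMod.val_natCast_of_lt i.isLt

lemma cF_tF (z : ZMod k) : cF (tF z) = z := by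
  simp [cF, tF, ZMod.natCast_val, ZMod.cast_id]

lemma cF_inj : Function.Injective (cF (k := k)) := by
  intro a b h
  rw [← tF_cF a, h, tF_cF]

lemma tF_add_one (z : ZMod k) : tF (z + 1) = tF z + 1 := by
  obtain ⟨m, rfl⟩ : ∃ m, k = m + 1 := ⟨k - 1, (Nat.succ_pred_eq_of_ne_zero (NeZero.ne k)).symm⟩
  ext
  show (z + 1).val = ((tF z) + 1).val
  rw [ZMod.val_add, Fin.val_add]
  congr 1

lemma cF_add_one (i : Fin k) : cF (i + 1) = cF i + 1 := by
  have := tF_add_one (cF i)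
  rw [tF_cF] at this
  rw [← this, cF_tF]

@[ext]
structure NF (k : ℕ) [NeZero k] : Type where
  r : ℤ
  L : List (ZMod k)
  ok : L.Chain' (fun p q => q ≠ p + 1)

/-- Action of `σⱼ` on normal forms. -/
def posAct (j : ZMod k) : NF k → NF k
  | ⟨r, [], _⟩ => ⟨r, [j + 2 * (r : ZMod k)], show List.Chain' _ _ from List.isChain_singleton _⟩
  | ⟨r, h :: t, ok⟩ =>
    if hc : h = j + 2 * (r : ZMod k) + 1 then ⟨r + 1, t, show List.Chain' _ _ from ok.tail⟩
    else ⟨r, (j + 2 * (r : ZMod k)) :: h :: t, show List.Chain' _ _ from List.isChain_cons_cons.mpr ⟨fun e => hc e, ok⟩⟩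

/-- Action of `σⱼ⁻¹` on normal forms. -/
def negAct (j : ZMod k) : NF k → NF k
  | ⟨r, [], _⟩ => ⟨r - 1, [j + 2 * (r : ZMod k) - 1], show List.Chain' _ _ from List.isChain_singleton _⟩
  | ⟨r, h :: t, ok⟩ =>
    if hc : h = j + 2 * (r : ZMod k) then ⟨r, t, show List.Chain' _ _ from ok.tail⟩
    else ⟨r - 1, (j + 2 * (r : ZMod k) - 1) :: h :: t,
      show List.Chain' _ _ from List.isChain_cons_cons.mpr ⟨fun e => hc (by rw [e]; ring), ok⟩⟩

lemma neg_pos (j : ZMod k) (x : NF k) : negAct j (posAct j x) = x := by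
  obtain ⟨r, L, ok⟩ := x
  match L, ok with
  | [], _ => simp [posAct, negAct]
  | h :: t, ok =>
    by_cases hc : h = j + 2 * (r : ZMod k) + 1
    · rw [posAct, dif_pos hc]
      match t, ok with
      | [], _ => simp [negAct, hc]; ring
      | h2 :: t2, ok =>
        have h2ne : h2 ≠ j + 2 * ((r + 1 : ℤ) : ZMod k) := by
          have := (List.isChain_cons_cons.mp ok).1
          push_cast
          rw [hc] at this; intro e; apply this; rw [e]; ring
        rw [negAct, dif_neg h2ne]
        ext1 <;> simp [hc] <;> push_cast <;> ring
    · rw [posAct, dif_neg hc, negAct, dif_pos rfl]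

lemma pos_neg (j : ZMod k) (x : NF k) : posAct j (negAct j x) = x := by
  obtain ⟨r, L, ok⟩ := x
  match L, ok with
  | [], _ =>
    rw [negAct, posAct, dif_pos (by push_cast; ring)]
    simp
  | h :: t, ok =>
    by_cases hc : h = j + 2 * (r : ZMod k)
    · rw [negAct, dif_pos hc]
      match t, ok with
      | [], _ => rw [posAct]; ext1 <;> simp [hc]
      | h2 :: t2, ok =>
        have h2ne : h2 ≠ j + 2 * (r : ZMod k) + 1 := by
          have := (List.isChain_cons_cons.mp ok).1
          rw [hc] at this; exact this
        rw [posAct, dif_neg h2ne]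
        ext1 <;> simp [hc]
    · rw [negAct, dif_neg hc, posAct, dif_pos (by push_cast; ring)]
      ext1 <;> simp

/-- `σⱼ` acts as a bijection. -/
def genE (j : ZMod k) : Equiv.Perm (NF k) := ⟨posAct j, negAct j, neg_pos j, pos_neg j⟩

lemma pos_pos (c : ZMod k) (x : NF k) :
    posAct c (posAct (c + 1) x) = ⟨x.r + 1, x.L, x.ok⟩ := by
  obtain ⟨r, L, ok⟩ := x
  match L, ok with
  | [], _ =>
    rw [posAct, posAct, dif_pos (by ring)]
  | h :: t, ok =>
    by_cases hc : h = (c + 1) + 2 * (r : ZMod k) + 1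
    · rw [posAct, dif_pos hc]
      match t, ok with
      | [], _ =>
        rw [posAct]
        ext1 <;> simp [hc] <;> push_cast <;> ring
      | h2 :: t2, ok =>
        have h2ne : h2 ≠ c + 2 * ((r + 1 : ℤ) : ZMod k) + 1 := by
          have := (List.isChain_cons_cons.mp ok).1
          rw [hc] at this
          intro e; apply this; rw [e]; push_cast; ring
        rw [posAct, dif_neg h2ne]
        ext1 <;> simp [hc] <;> push_cast <;> ring
    · rw [posAct, dif_neg hc, posAct, dif_pos (by ring)]


/-- basic relation in the group -/
lemma sig_rel (i : Fin k) : sig i * sig (i + 1) = dualDelta k := by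
  have hmem : (FreeGroup.of i * FreeGroup.of (i + 1) *
      (FreeGroup.of 0 * FreeGroup.of 1)⁻¹ : FreeGroup (Fin k)) ∈
      Subgroup.normalClosure (DualRels k) :=
    Subgroup.subset_normalClosure ⟨i, rfl⟩
  have h1 : (PresentedGroup.mk (DualRels k)) (FreeGroup.of i * FreeGroup.of (i + 1) *
      (FreeGroup.of 0 * FreeGroup.of 1)⁻¹) = 1 := (QuotientGroup.eq_one_iff _).mpr hmem
  rw [map_mul, map_inv, map_mul, mul_inv_eq_one] at h1
  exact h1

/-- σ over `ZMod k` indices -/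
def sigZ (z : ZMod k) : DualArtin k := sig (tF z)

lemma sigZ_rel (z : ZMod k) : sigZ z * sigZ (z + 1) = dualDelta k := by
  rw [sigZ, sigZ, tF_add_one]; exact sig_rel (tF z)

lemma sigZ_delta_comm (z : ZMod k) : sigZ z * dualDelta k = dualDelta k * sigZ (z + 2) := by
  have h1 := sigZ_rel z
  have h2 := sigZ_rel (z + 1)
  calc sigZ z * dualDelta k = sigZ z * (sigZ (z+1) * sigZ (z+1+1)) := by rw [h2]
    _ = (sigZ z * sigZ (z+1)) * sigZ (z+2) := by rw [← mul_assoc]; ring_nf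
    _ = dualDelta k * sigZ (z + 2) := by rw [h1]

lemma sigZ_delta_zpow_comm (z : ZMod k) (r : ℤ) :
    sigZ z * dualDelta k ^ r = dualDelta k ^ r * sigZ (z + 2 * (r : ZMod k)) := by
  induction r using Int.induction_on with
  | zero => simp
  | succ n ih =>
    have : ((n : ℤ) + 1 : ℤ) = (n + 1 : ℤ) := by ring
    rw [zpow_add_one, ← mul_assoc, ih, mul_assoc, sigZ_delta_comm, ← mul_assoc,
      ← zpow_add_one]
    congr 2
    push_cast; ring
  | pred n ih =>
    have key : sigZ (z + 2 * ((-n : ℤ) : ZMod k)) * (dualDelta k)⁻¹ =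
        (dualDelta k)⁻¹ * sigZ (z + 2 * ((-n - 1 : ℤ) : ZMod k)) := by
      have comm2 : sigZ (z + 2 * ((-n - 1 : ℤ) : ZMod k)) * dualDelta k =
          dualDelta k * sigZ (z + 2 * ((-n : ℤ) : ZMod k)) := by
        rw [sigZ_delta_comm]
        congr 2
        push_cast; ring
      rw [mul_inv_eq_iff_eq_mul, mul_assoc, comm2, ← mul_assoc, inv_mul_cancel, one_mul]
    rw [zpow_sub_one, ← mul_assoc, ih, mul_assoc, key, ← mul_assoc, ← zpow_sub_one]

lemma sigZ_inv_eq (z : ZMod k) : (sigZ z)⁻¹ = (dualDelta k)⁻¹ * sigZ (z - 1) := by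
  have := sigZ_rel (z - 1)
  rw [sub_add_cancel] at this
  rw [← this]; group

/-- interpretation of normal forms back in the group -/
def iota (x : NF k) : DualArtin k := dualDelta k ^ x.r * (x.L.map sigZ).prod

lemma iota_pos (j : ZMod k) (x : NF k) : sigZ j * iota x = iota (posAct j x) := by
  obtain ⟨r, L, ok⟩ := x
  have comm := sigZ_delta_zpow_comm j r
  match L, ok with
  | [], _ =>
    rw [posAct, iota, iota]
    simp only [List.map_nil, List.prod_nil, mul_one, List.map_cons, List.prod_cons, List.prod_nil]
    exact comm
  | h :: t, ok =>
    by_cases hc : h = j + 2 * (r : ZMod k) + 1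
    · rw [posAct, dif_pos hc, iota, iota]
      simp only [List.map_cons, List.prod_cons]
      rw [← mul_assoc, comm, mul_assoc, hc, ← mul_assoc (sigZ _), sigZ_rel,
        ← mul_assoc, ← zpow_add_one]
    · rw [posAct, dif_neg hc, iota, iota]
      simp only [List.map_cons, List.prod_cons]
      rw [← mul_assoc, comm, mul_assoc]

lemma iota_neg (j : ZMod k) (x : NF k) : (sigZ j)⁻¹ * iota x = iota (negAct j x) := by
  obtain ⟨r, L, ok⟩ := x
  have comm : (sigZ j)⁻¹ * dualDelta k ^ r =
      dualDelta k ^ r * (sigZ (j + 2 * (r : ZMod k)))⁻¹ := by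
    rw [eq_comm, mul_inv_eq_iff_eq_mul, mul_assoc, ← sigZ_delta_zpow_comm, ← mul_assoc,
      inv_mul_cancel, one_mul]
  match L, ok with
  | [], _ =>
    rw [negAct, iota, iota]
    simp only [List.map_nil, List.prod_nil, mul_one, List.map_cons, List.prod_cons]
    rw [comm, sigZ_inv_eq, ← mul_assoc, ← zpow_sub_one]
  | h :: t, ok =>
    by_cases hc : h = j + 2 * (r : ZMod k)
    · rw [negAct, dif_pos hc, iota, iota]
      simp only [List.map_cons, List.prod_cons]
      rw [← mul_assoc, comm, mul_assoc, hc, ← mul_assoc (sigZ _)⁻¹, inv_mul_cancel, one_mul]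
    · rw [negAct, dif_neg hc, iota, iota]
      simp only [List.map_cons, List.prod_cons]
      rw [← mul_assoc, comm, mul_assoc, sigZ_inv_eq, mul_assoc, ← mul_assoc, ← zpow_sub_one]

/-! ### The permutation representation -/

def fGen (i : Fin k) : Equiv.Perm (NF k) := genE (cF i)

lemma fGen_rels : ∀ r ∈ DualRels k, FreeGroup.lift (fGen (k := k)) r = 1 := by
  rintro _ ⟨i, rfl⟩
  simp only [map_mul, map_inv, FreeGroup.lift_apply_of, mul_inv_eq_one]
  have key : ∀ c : ZMod k, genE c * genE (c + 1) = genE 0 * genE (1 : ZMod k) := by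
    intro c
    apply Equiv.ext
    intro x
    show posAct c (posAct (c + 1) x) = posAct 0 (posAct (1 : ZMod k) x)
    have h2 := pos_pos (0 : ZMod k) x
    rw [zero_add] at h2
    rw [pos_pos, h2]
  show fGen i * fGen (i + 1) = fGen 0 * fGen 1
  unfold fGen
  rw [cF_add_one, key (cF i)]
  have h0 : cF (0 : Fin k) = 0 := by
    have : cF (0 : Fin k) = ((0 : Fin k).val : ZMod k) := rfl
    simp [this]
  have h1 : cF (1 : Fin k) = 1 := by
    have := cF_add_one (0 : Fin k)
    rw [zero_add, h0, zero_add] at this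
    exact this
  rw [h0, h1]

/-- The representation of the group on normal forms. -/
noncomputable def rho : DualArtin k →* Equiv.Perm (NF k) := PresentedGroup.toGroup fGen_rels

lemma rho_sig (i : Fin k) : rho (sig i) = fGen i := PresentedGroup.toGroup.of fGen_rels

/-- The base point. -/
def pt : NF k := ⟨0, [], show List.Chain' _ _ from List.isChain_nil⟩

/-- Normal form of a group element. -/
noncomputable def nu (w : DualArtin k) : NF k := rho w pt

lemma key_iota : ∀ (w : DualArtin k) (x : NF k), iota (rho w x) = w * iota x := by
  intro w
  induction w using PresentedGroup.induction_on with
  | H z =>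
    induction z using FreeGroup.induction_on with
    | C1 => intro x; simp [map_one]
    | of i =>
      intro x
      show iota ((rho (sig i)) x) = sig i * iota x
      rw [rho_sig]
      have : (fGen i) x = posAct (cF i) x := rfl
      rw [this, ← iota_pos]
      congr 1
      rw [sigZ, tF_cF]
    | inv_of i hi =>
      intro x
      show iota ((rho (sig i)⁻¹) x) = (sig i)⁻¹ * iota x
      rw [map_inv, rho_sig]
      have : ((fGen i)⁻¹ : Equiv.Perm (NF k)) x = negAct (cF i) x := rfl
      rw [this, ← iota_neg]
      congr 1
      rw [sigZ, tF_cF]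
    | mul z w hz hw =>
      intro x
      show iota ((rho (PresentedGroup.mk (DualRels k) z * PresentedGroup.mk (DualRels k) w)) x) = _
      rw [map_mul]
      show iota (rho (PresentedGroup.mk (DualRels k) z) (rho (PresentedGroup.mk (DualRels k) w) x)) = _
      rw [hz, hw, map_mul, mul_assoc]

lemma iota_nu (w : DualArtin k) : iota (nu w) = w := by
  have := key_iota w pt
  rw [nu, this]
  simp [iota, pt]

lemma nu_inj : Function.Injective (nu (k := k)) := by
  intro a b h
  rw [← iota_nu a, ← iota_nu b, h]

/-! ### The charge homomorphism -/

lemma ch_rels : ∀ r ∈ DualRels k,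
    FreeGroup.lift (fun _ : Fin k => (Multiplicative.ofAdd (1 : ℤ))) r = 1 := by
  rintro _ ⟨i, rfl⟩
  simp only [map_mul, map_inv, FreeGroup.lift_apply_of, mul_inv_eq_one]

noncomputable def chHom : DualArtin k →* Multiplicative ℤ := PresentedGroup.toGroup ch_rels

noncomputable def ch (w : DualArtin k) : ℤ := Multiplicative.toAdd (chHom w)

lemma ch_mul (a b : DualArtin k) : ch (a * b) = ch a + ch b := by
  unfold ch; rw [map_mul]; rfl

lemma ch_sig (i : Fin k) : ch (sig i) = 1 := by
  unfold ch chHom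
  rw [show sig i = PresentedGroup.of i from rfl, PresentedGroup.toGroup.of]
  rfl

lemma ch_sigZ (z : ZMod k) : ch (sigZ z) = 1 := ch_sig _

lemma ch_inv (a : DualArtin k) : ch a⁻¹ = - ch a := by
  unfold ch; rw [map_inv]; rfl

lemma ch_delta : ch (dualDelta k) = 2 := by
  rw [dualDelta, ch_mul, ch_sig, ch_sig]; norm_num

lemma ch_delta_zpow (r : ℤ) : ch (dualDelta k ^ r) = 2 * r := by
  unfold ch
  rw [map_zpow]
  rw [show (Multiplicative.toAdd (chHom (dualDelta k) ^ r)) = r • Multiplicative.toAdd (chHom (dualDelta k)) from rfl]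
  have : Multiplicative.toAdd (chHom (dualDelta k)) = 2 := ch_delta
  rw [this]
  simp [smul_eq_mul]; ring

lemma ch_iota (x : NF k) : ch (iota x) = 2 * x.r + x.L.length := by
  rw [iota, ch_mul, ch_delta_zpow]
  congr 1
  induction x.L with
  | nil => simp [ch]
  | cons h t ih =>
    simp only [List.map_cons, List.prod_cons, List.length_cons]
    rw [ch_mul, ch_sigZ, ih]
    push_cast; ring

lemma ch_eq (w : DualArtin k) : ch w = 2 * (nu w).r + (nu w).L.length := by
  conv_lhs => rw [← iota_nu w]
  exact ch_iota _

end DualGeo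

namespace DualGeo
variable {k : ℕ} [NeZero k]

/-! ### Word length -/

/-- The geodesic length of a normal form. -/
def nfLen (x : NF k) : ℕ := max x.L.length (2 * x.r + x.L.length).natAbs

lemma sigZ_mem_gens (z : ZMod k) : sigZ z ∈ dualGens k := ⟨tF z, Or.inl rfl⟩

lemma gens_cases {g : DualArtin k} (hg : g ∈ dualGens k) :
    ∃ i : Fin k, g = sig i ∨ g = (sig i)⁻¹ := hg

lemma ch_gen {g : DualArtin k} (hg : g ∈ dualGens k) : (ch g).natAbs = 1 := by
  obtain ⟨i, hi | hi⟩ := hg <;> subst hi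
  · rw [ch_sig]; rfl
  · rw [ch_inv, ch_sig]; rfl

lemma len_posAct (j : ZMod k) (x : NF k) :
    (posAct j x).L.length ≤ x.L.length + 1 := by
  obtain ⟨r, L, ok⟩ := x
  match L, ok with
  | [], _ => simp [posAct]
  | h :: t, ok =>
    by_cases hc : h = j + 2 * (r : ZMod k) + 1
    · rw [posAct, dif_pos hc]; simp; omega
    · rw [posAct, dif_neg hc]; simp

lemma len_negAct (j : ZMod k) (x : NF k) :
    (negAct j x).L.length ≤ x.L.length + 1 := by
  obtain ⟨r, L, ok⟩ := x
  match L, ok with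
  | [], _ => simp [negAct]
  | h :: t, ok =>
    by_cases hc : h = j + 2 * (r : ZMod k)
    · rw [negAct, dif_pos hc]; simp; omega
    · rw [negAct, dif_neg hc]; simp

lemma len_rho_gen {g : DualArtin k} (hg : g ∈ dualGens k) (x : NF k) :
    (rho g x).L.length ≤ x.L.length + 1 := by
  obtain ⟨i, hi | hi⟩ := hg <;> subst hi
  · rw [rho_sig]
    exact len_posAct (cF i) x
  · rw [map_inv, rho_sig]
    exact len_negAct (cF i) x

lemma ch_le_of_word (l : List (DualArtin k)) (hmem : ∀ g ∈ l, g ∈ dualGens k) :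
    (ch l.prod).natAbs ≤ l.length := by
  induction l with
  | nil => simp [ch]
  | cons g t ih =>
    rw [List.prod_cons, ch_mul]
    have h1 := ch_gen (hmem g (by simp))
    have h2 := ih (fun g hg => hmem g (List.mem_cons_of_mem _ hg))
    simp only [List.length_cons]
    omega

lemma m_le_of_word (l : List (DualArtin k)) (hmem : ∀ g ∈ l, g ∈ dualGens k) :
    (nu l.prod).L.length ≤ l.length := by
  induction l with
  | nil => simp [nu, map_one, pt]
  | cons g t ih =>
    rw [List.prod_cons]
    have : nu (g * t.prod) = rho g (nu t.prod) := by
      rw [nu, nu, map_mul]; rfl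
    rw [this]
    have h1 := len_rho_gen (hmem g (by simp)) (nu t.prod)
    have h2 := ih (fun g hg => hmem g (List.mem_cons_of_mem _ hg))
    simp only [List.length_cons]
    omega

lemma nfLen_le_of_word (l : List (DualArtin k)) (hmem : ∀ g ∈ l, g ∈ dualGens k) :
    nfLen (nu l.prod) ≤ l.length := by
  have h1 := ch_le_of_word l hmem
  have h2 := m_le_of_word l hmem
  rw [ch_eq] at h1
  rw [nfLen]
  omega


lemma delta_inv_sigZ (a : ZMod k) : (dualDelta k)⁻¹ * sigZ a = (sigZ (a + 1))⁻¹ := by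
  rw [← sigZ_rel a]; group

lemma delta_pow_word (n : ℕ) : ∃ l : List (DualArtin k), l.length = 2 * n ∧
    (∀ g ∈ l, g ∈ dualGens k) ∧ l.prod = dualDelta k ^ n := by
  induction n with
  | zero => exact ⟨[], by simp⟩
  | succ n ih =>
    obtain ⟨l, hlen, hmem, hprod⟩ := ih
    refine ⟨sig 0 :: sig 1 :: l, by simp [hlen]; ring, ?_, ?_⟩
    · intro g hg
      simp only [List.mem_cons] at hg
      rcases hg with rfl | rfl | h
      · exact ⟨0, Or.inl rfl⟩
      · exact ⟨1, Or.inl rfl⟩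
      · exact hmem g h
    · rw [List.prod_cons, List.prod_cons, hprod, ← mul_assoc, ← dualDelta, pow_succ']

lemma delta_pow_word_neg (n : ℕ) : ∃ l : List (DualArtin k), l.length = 2 * n ∧
    (∀ g ∈ l, g ∈ dualGens k) ∧ l.prod = dualDelta k ^ (-(n : ℤ)) := by
  induction n with
  | zero => exact ⟨[], by simp⟩
  | succ n ih =>
    obtain ⟨l, hlen, hmem, hprod⟩ := ih
    refine ⟨(sig 1)⁻¹ :: (sig 0)⁻¹ :: l, by simp [hlen]; ring, ?_, ?_⟩
    · intro g hg
      simp only [List.mem_cons] at hg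
      rcases hg with rfl | rfl | h
      · exact ⟨1, Or.inr rfl⟩
      · exact ⟨0, Or.inr rfl⟩
      · exact hmem g h
    · rw [List.prod_cons, List.prod_cons, hprod]
      have : ((sig 1)⁻¹ * (sig 0)⁻¹ : DualArtin k) = (dualDelta k)⁻¹ := by
        rw [dualDelta]; group
      rw [← mul_assoc, this, ← zpow_neg_one, ← zpow_add]
      congr 1
      push_cast; ring

lemma negword (t : ℕ) : ∀ L : List (ZMod k), t ≤ L.length →
    ∃ l : List (DualArtin k), l.length = L.length ∧ (∀ g ∈ l, g ∈ dualGens k) ∧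
      l.prod = dualDelta k ^ (-(t : ℤ)) * (L.map sigZ).prod := by
  induction t with
  | zero =>
    intro L _
    exact ⟨L.map sigZ, by simp, fun g hg => by
      obtain ⟨z, _, rfl⟩ := List.mem_map.mp hg; exact sigZ_mem_gens z, by simp⟩
  | succ t ih =>
    intro L hL
    match L with
    | a :: L' =>
      obtain ⟨l', hlen, hmem, hprod⟩ := ih L' (by simpa using hL)
      refine ⟨(sigZ (a + 1 + 2 * (t : ZMod k)))⁻¹ :: l', by simp [hlen], ?_, ?_⟩
      · intro g hg
        simp only [List.mem_cons] at hg
        rcases hg with rfl | h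
        · exact ⟨tF _, Or.inr rfl⟩
        · exact hmem g h
      · rw [List.prod_cons, hprod, List.map_cons, List.prod_cons]
        rw [← mul_assoc, ← mul_assoc]
        congr 1
        -- σ'(a+1+2t)⁻¹ * δ^{-t} = δ^{-(t+1)} * σ' a
        have comm := sigZ_delta_zpow_comm (a + 1 + 2 * (t : ZMod k)) (-(t : ℤ))
        have harg : a + 1 + 2 * (t : ZMod k) + 2 * ((-(t : ℤ) : ℤ) : ZMod k) = a + 1 := by
          push_cast; ring
        rw [harg] at comm
        -- comm : σ'(a+1+2t) * δ^{-t} = δ^{-t} * σ'(a+1)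
        have e1 : (sigZ (a + 1 + 2 * (t : ZMod k)))⁻¹ * dualDelta k ^ (-(t : ℤ)) =
            dualDelta k ^ (-(t : ℤ)) * (sigZ (a + 1))⁻¹ := by
          rw [inv_mul_eq_iff_eq_mul, ← mul_assoc, comm, mul_assoc, mul_inv_cancel, mul_one]
        rw [e1]
        have e2 : (sigZ (a + 1))⁻¹ = (dualDelta k)⁻¹ * sigZ a := (delta_inv_sigZ a).symm
        rw [e2, ← mul_assoc, ← zpow_sub_one]
        congr 1
        push_cast; ring

/-- The word length is computed by the normal form. -/
lemma wordLength_eq (w : DualArtin k) : wordLength (dualGens k) w = nfLen (nu w) := by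
  have hex : ∃ l : List (DualArtin k), l.length = nfLen (nu w) ∧
      (∀ g ∈ l, g ∈ dualGens k) ∧ l.prod = w := by
    set x := nu w with hx
    have hw : w = dualDelta k ^ x.r * (x.L.map sigZ).prod := (iota_nu w).symm
    set m := x.L.length with hm
    by_cases hr : 0 ≤ x.r
    · obtain ⟨l, hlen, hmem, hprod⟩ := delta_pow_word (k := k) x.r.toNat
      refine ⟨l ++ x.L.map sigZ, ?_, ?_, ?_⟩
      · simp only [List.length_append, hlen, List.length_map]
        rw [nfLen]
        omega
      · intro g hg
        rcases List.mem_append.mp hg with h | h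
        · exact hmem g h
        · obtain ⟨z, _, rfl⟩ := List.mem_map.mp h; exact sigZ_mem_gens z
      · rw [List.prod_append, hprod, hw, ← zpow_natCast]
        congr 2
        omega
    · push_neg at hr
      set t := (-x.r).toNat with ht
      have htr : (t : ℤ) = -x.r := by omega
      by_cases htm : t ≤ m
      · obtain ⟨l, hlen, hmem, hprod⟩ := negword t x.L htm
        refine ⟨l, ?_, hmem, ?_⟩
        · rw [hlen, nfLen]
          omega
        · rw [hprod, hw]
          congr 2
          omega
      · obtain ⟨l1, hlen1, hmem1, hprod1⟩ := delta_pow_word_neg (k := k) (t - m)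
        obtain ⟨l2, hlen2, hmem2, hprod2⟩ := negword m x.L le_rfl
        refine ⟨l1 ++ l2, ?_, ?_, ?_⟩
        · simp only [List.length_append, hlen1, hlen2]
          rw [nfLen]
          omega
        · intro g hg
          rcases List.mem_append.mp hg with h | h
          · exact hmem1 g h
          · exact hmem2 g h
        · rw [List.prod_append, hprod1, hprod2, hw, ← mul_assoc, ← zpow_add]
          congr 2
          omega
  obtain ⟨l, hlen, hmem, hprod⟩ := hex
  unfold wordLength
  apply le_antisymm
  · exact Nat.sInf_le ⟨l, hlen, hmem, hprod⟩
  · refine le_csInf ⟨nfLen (nu w), ⟨l, hlen, hmem, hprod⟩⟩ ?_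
    rintro n ⟨l', hl', hmem', hprod'⟩
    have := nfLen_le_of_word l' hmem'
    rw [hprod'] at this
    omega


/-! ### Evaluating words -/

/-- One letter acting on a normal form. -/
def step (p : Fin k × Bool) (x : NF k) : NF k :=
  if p.2 then posAct (cF p.1) x else negAct (cF p.1) x

/-- The normal form of a word. -/
def nfW (y : List (Fin k × Bool)) : NF k := y.foldr step pt

lemma nu_evalWord (y : List (Fin k × Bool)) : nu (evalWord y) = nfW y := by
  induction y with
  | nil =>
    show nu 1 = pt
    rw [nu, map_one]; rfl
  | cons p y ih =>
    have he : evalWord (p :: y) = (if p.2 then sig p.1 else (sig p.1)⁻¹) * evalWord y := by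
      rw [evalWord, List.map_cons, List.prod_cons]; rfl
    have hnu : ∀ g w, nu (g * w) = rho g (nu (k := k) w) := by
      intro g w; rw [nu, nu, map_mul]; rfl
    rw [he, hnu]
    show rho _ (nu (evalWord y)) = nfW (p :: y)
    rw [ih]
    show rho _ (nfW y) = step p (nfW y)
    by_cases hb : p.2
    · rw [if_pos hb, rho_sig, step, if_pos hb]
      rfl
    · rw [if_neg hb, map_inv, rho_sig, step, if_neg hb]
      rfl

lemma ch_evalWord (y : List (Fin k × Bool)) :
    ch (evalWord y) = (y.countP (fun p => p.2) : ℤ) - (y.countP (fun p => !p.2) : ℤ) := by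
  induction y with
  | nil => simp [evalWord, ch]
  | cons p y ih =>
    have he : evalWord (p :: y) = (if p.2 then sig p.1 else (sig p.1)⁻¹) * evalWord y := by
      rw [evalWord, List.map_cons, List.prod_cons]; rfl
    rw [he, ch_mul, ih, List.countP_cons, List.countP_cons]
    by_cases hb : p.2
    · rw [if_pos hb, ch_sig]
      simp [hb]
      ring
    · rw [if_neg hb, ch_inv, ch_sig]
      simp [hb]
      ring

lemma step_len (p : Fin k × Bool) (x : NF k) :
    (step p x).L.length = x.L.length + 1 ∨ (step p x).L.length + 1 = x.L.length := by
  rw [step]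
  by_cases hb : p.2 <;> simp only [hb, if_true, if_false]
  · obtain ⟨r, L, ok⟩ := x
    match L, ok with
    | [], _ => left; simp [posAct]
    | h :: t, ok =>
      by_cases hc : h = cF p.1 + 2 * (r : ZMod k) + 1
      · rw [posAct, dif_pos hc]; right; simp
      · rw [posAct, dif_neg hc]; left; simp
  · obtain ⟨r, L, ok⟩ := x
    match L, ok with
    | [], _ => left; simp [negAct]
    | h :: t, ok =>
      by_cases hc : h = cF p.1 + 2 * (r : ZMod k)
      · rw [negAct, dif_pos hc]; right; simp
      · rw [negAct, dif_neg hc]; left; simp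

/-- A word is `Good` if its normal form has a list part as long as the word. -/
def Good (y : List (Fin k × Bool)) : Prop := (nfW y).L.length = y.length

lemma m_le_len (y : List (Fin k × Bool)) : (nfW y).L.length ≤ y.length := by
  induction y with
  | nil => simp [nfW, pt]
  | cons p y ih =>
    have : nfW (p :: y) = step p (nfW y) := rfl
    rw [this]
    have := step_len p (nfW y)
    simp only [List.length_cons]
    omega

lemma good_cons (p : Fin k × Bool) (y : List (Fin k × Bool)) :
    Good (p :: y) ↔ Good y ∧ (step p (nfW y)).L.length = (nfW y).L.length + 1 := by
  have hst : nfW (p :: y) = step p (nfW y) := rfl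
  have h1 := step_len p (nfW y)
  have h2 := m_le_len y
  rw [Good, Good, hst, List.length_cons]
  omega

lemma good_nil : Good ([] : List (Fin k × Bool)) := rfl

/-- The characterization of geodesic words. -/
lemma isGeodesic_iff (y : List (Fin k × Bool)) :
    IsGeodesicWord y ↔ (Good y ∨ (∀ p ∈ y, p.2 = true) ∨ (∀ p ∈ y, p.2 = false)) := by
  rw [IsGeodesicWord, wordLength_eq, nu_evalWord]
  have hm := m_le_len y
  have hch := ch_evalWord y
  rw [ch_eq, nu_evalWord] at hch
  have hcount : y.length = y.countP (fun p => p.2) + y.countP (fun p => !p.2) := by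
    have h := List.length_eq_countP_add_countP (fun p : Fin k × Bool => p.2) (l := y)
    have hfun : (fun (a : Fin k × Bool) => decide ¬a.2 = true) = fun p : Fin k × Bool => !p.2 := by
      funext a; cases h2 : a.2 <;> simp
    rwa [hfun] at h
  have hpos : (∀ p ∈ y, p.2 = true) ↔ y.countP (fun p => !p.2) = 0 := by
    rw [List.countP_eq_zero]
    constructor
    · intro h p hp; rw [h p hp]; simp
    · intro h p hp
      have := h p hp
      simpa using this
  have hneg : (∀ p ∈ y, p.2 = false) ↔ y.countP (fun p => p.2) = 0 := by
    rw [List.countP_eq_zero]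
    constructor
    · intro h p hp; rw [h p hp]; simp
    · intro h p hp
      have := h p hp
      simpa using this
  rw [Good, hpos, hneg, nfLen]
  omega


/-! ### Counting -/

instance : DecidablePred (Good (k := k)) := fun y => by unfold Good; infer_instance

/-- The letter `p` does not shorten the normal form of `y`. -/
def okP (p : Fin k × Bool) (y : List (Fin k × Bool)) : Prop :=
  (step p (nfW y)).L.length = (nfW y).L.length + 1

instance : ∀ (p : Fin k × Bool) (y : List (Fin k × Bool)), Decidable (okP p y) :=
  fun p y => by unfold okP; infer_instance

variable (k) in
/-- All words of length `n`. -/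
def words : ℕ → Finset (List (Fin k × Bool))
  | 0 => {[]}
  | n+1 => (words n).biUnion fun y =>
      Finset.image (fun p : Fin k × Bool => p :: y) Finset.univ

lemma mem_words (n : ℕ) (y : List (Fin k × Bool)) : y ∈ words k n ↔ y.length = n := by
  induction n generalizing y with
  | zero => simp [words, List.length_eq_zero_iff]
  | succ n ih =>
    rw [words]
    simp only [Finset.mem_biUnion, Finset.mem_image, Finset.mem_univ, true_and]
    constructor
    · rintro ⟨z, hz, p, rfl⟩
      simp [ih _ |>.mp hz]
    · intro hlen
      match y with
      | p :: z => exact ⟨z, (ih z).mpr (by simpa using hlen), p, rfl⟩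

/-- The master recursion for counting words defined by a letter-local automaton condition. -/
lemma card_filter_cons (P : List (Fin k × Bool) → Prop) [DecidablePred P]
    (Q : (Fin k × Bool) → List (Fin k × Bool) → Prop) [∀ p y, Decidable (Q p y)]
    (hP : ∀ p y, P (p :: y) ↔ P y ∧ Q p y) (n c : ℕ)
    (hc : ∀ y, y.length = n → P y → (Finset.univ.filter (fun p => Q p y)).card = c) :
    ((words k (n+1)).filter P).card = c * ((words k n).filter P).card := by
  have hset : (words k (n+1)).filter P = ((words k n).filter P).biUnion
      (fun y => (Finset.univ.filter (fun p => Q p y)).image (fun p => p :: y)) := by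
    ext z
    simp only [Finset.mem_filter, Finset.mem_biUnion, Finset.mem_image, mem_words]
    constructor
    · rintro ⟨hlen, hz⟩
      match z with
      | p :: y =>
        obtain ⟨hPy, hQ⟩ := (hP p y).mp hz
        exact ⟨y, ⟨by simpa using hlen, hPy⟩, p, by simp [hQ], rfl⟩
    · rintro ⟨y, ⟨hylen, hPy⟩, p, hQ, rfl⟩
      simp only [Finset.mem_filter, Finset.mem_univ, true_and] at hQ
      exact ⟨by simp [hylen], (hP p y).mpr ⟨hPy, hQ⟩⟩
  rw [hset, Finset.card_biUnion]
  · rw [Finset.sum_congr rfl (fun y hy => ?_), Finset.sum_const, smul_eq_mul, mul_comm]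
    · rw [Finset.card_image_of_injective _ (fun p q h => by injection h)]
      simp only [Finset.mem_filter, mem_words] at hy
      exact hc y hy.1 hy.2
  · intro y1 h1 y2 h2 hne
    simp only [Finset.disjoint_left, Finset.mem_image]
    rintro z ⟨p, _, rfl⟩ ⟨q, _, hq⟩
    injection hq with _ hq2
    exact hne hq2.symm

lemma cF_eq_iff (j : Fin k) (z : ZMod k) : cF j = z ↔ j = tF z := by
  constructor
  · intro h; rw [← h, tF_cF]
  · intro h; rw [h, cF_tF]

lemma posAct_len_iff (j : ZMod k) (x : NF k) (h : ZMod k) (t : List (ZMod k))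
    (hL : x.L = h :: t) :
    ((posAct j x).L.length = x.L.length + 1) ↔ j ≠ h - 2 * (x.r : ZMod k) - 1 := by
  obtain ⟨r, L, ok⟩ := x
  simp only at hL
  subst hL
  by_cases hc : h = j + 2 * (r : ZMod k) + 1
  · rw [posAct, dif_pos hc]
    simp only [List.length_cons]
    constructor
    · intro he; omega
    · intro hj; exfalso; apply hj; rw [hc]; ring
  · rw [posAct, dif_neg hc]
    simp only [List.length_cons]
    constructor
    · intro _ hj
      exact hc (by rw [hj]; ring)
    · intro _; simp
  
lemma negAct_len_iff (j : ZMod k) (x : NF k) (h : ZMod k) (t : List (ZMod k))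
    (hL : x.L = h :: t) :
    ((negAct j x).L.length = x.L.length + 1) ↔ j ≠ h - 2 * (x.r : ZMod k) := by
  obtain ⟨r, L, ok⟩ := x
  simp only at hL
  subst hL
  by_cases hc : h = j + 2 * (r : ZMod k)
  · rw [negAct, dif_pos hc]
    simp only [List.length_cons]
    constructor
    · intro he; omega
    · intro hj; exfalso; apply hj; rw [hc]; ring
  · rw [negAct, dif_neg hc]
    simp only [List.length_cons]
    constructor
    · intro _ hj
      exact hc (by rw [hj]; ring)
    · intro _; simp

lemma okP_true_iff (j : Fin k) (y : List (Fin k × Bool)) (h : ZMod k) (t : List (ZMod k))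
    (hL : (nfW y).L = h :: t) :
    okP (j, true) y ↔ j ≠ tF (h - 2 * ((nfW y).r : ZMod k) - 1) := by
  rw [okP, step, if_pos rfl, posAct_len_iff (cF j) (nfW y) h t hL]
  rw [ne_eq, ne_eq, cF_eq_iff]

lemma okP_false_iff (j : Fin k) (y : List (Fin k × Bool)) (h : ZMod k) (t : List (ZMod k))
    (hL : (nfW y).L = h :: t) :
    okP (j, false) y ↔ j ≠ tF (h - 2 * ((nfW y).r : ZMod k)) := by
  rw [okP, step, if_neg (by simp), negAct_len_iff (cF j) (nfW y) h t hL]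
  rw [ne_eq, ne_eq, cF_eq_iff]

lemma card_univ_letters : (Finset.univ : Finset (Fin k × Bool)).card = 2 * k := by
  simp [Finset.card_univ]
  ring

lemma card_true_letters :
    ((Finset.univ : Finset (Fin k × Bool)).filter (fun p => p.2 = true)).card = k := by
  have himg : (Finset.univ : Finset (Fin k × Bool)).filter (fun p => p.2 = true) =
      Finset.image (fun j : Fin k => (j, true)) Finset.univ := by
    ext ⟨j, b⟩
    simp only [Finset.mem_filter, Finset.mem_univ, true_and, Finset.mem_image]
    constructor
    · rintro rfl; exact ⟨j, rfl⟩
    · rintro ⟨a, ha⟩; injection ha with h1 h2; rw [← h2]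
  rw [himg, Finset.card_image_of_injective _ (fun p q h => by injection h)]
  simp

lemma card_false_letters :
    ((Finset.univ : Finset (Fin k × Bool)).filter (fun p => p.2 = false)).card = k := by
  have himg : (Finset.univ : Finset (Fin k × Bool)).filter (fun p => p.2 = false) =
      Finset.image (fun j : Fin k => (j, false)) Finset.univ := by
    ext ⟨j, b⟩
    simp only [Finset.mem_filter, Finset.mem_univ, true_and, Finset.mem_image]
    constructor
    · rintro rfl; exact ⟨j, rfl⟩
    · rintro ⟨a, ha⟩; injection ha with h1 h2; rw [← h2]
  rw [himg, Finset.card_image_of_injective _ (fun p q h => by injection h)]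
  simp


lemma okP_nil (p : Fin k × Bool) : okP p [] := by
  rw [okP]
  show (step p pt).L.length = (pt : NF k).L.length + 1
  rw [step]
  by_cases hb : p.2
  · rw [if_pos hb]; rfl
  · rw [if_neg hb]; rfl

lemma exists_head (y : List (Fin k × Bool)) (hy : 1 ≤ y.length) (hg : Good y) :
    ∃ h t, (nfW y).L = h :: t := by
  have hlen : (nfW y).L.length = y.length := hg
  match e : (nfW y).L with
  | [] => rw [e] at hlen; simp at hlen; omega
  | h :: t => exact ⟨h, t, rfl⟩

lemma filter_not_okP (y : List (Fin k × Bool)) (h : ZMod k) (t : List (ZMod k))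
    (hL : (nfW y).L = h :: t) :
    Finset.univ.filter (fun p : Fin k × Bool => ¬ okP p y) =
      {(tF (h - 2 * ((nfW y).r : ZMod k) - 1), true), (tF (h - 2 * ((nfW y).r : ZMod k)), false)} := by
  ext ⟨j, b⟩
  simp only [Finset.mem_filter, Finset.mem_univ, true_and, Finset.mem_insert,
    Finset.mem_singleton, Prod.mk.injEq]
  cases b
  · rw [okP_false_iff j y h t hL]
    simp
  · rw [okP_true_iff j y h t hL]
    simp

lemma card_okP (y : List (Fin k × Bool)) (hy : 1 ≤ y.length) (hg : Good y) :
    (Finset.univ.filter (fun p => okP p y)).card = 2 * k - 2 := by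
  obtain ⟨h, t, hL⟩ := exists_head y hy hg
  have hsplit := Finset.card_filter_add_card_filter_not
    (s := (Finset.univ : Finset (Fin k × Bool))) (p := fun p => okP p y)
  rw [filter_not_okP y h t hL, card_univ_letters] at hsplit
  have hpair : ({(tF (h - 2 * ((nfW y).r : ZMod k) - 1), true),
      (tF (h - 2 * ((nfW y).r : ZMod k)), false)} : Finset (Fin k × Bool)).card = 2 := by
    rw [Finset.card_pair]
    simp
  omega

lemma card_okP_pos (y : List (Fin k × Bool)) (hy : 1 ≤ y.length) (hg : Good y) :
    (Finset.univ.filter (fun p : Fin k × Bool => okP p y ∧ p.2 = true)).card = k - 1 := by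
  obtain ⟨h, t, hL⟩ := exists_head y hy hg
  have hset : Finset.univ.filter (fun p : Fin k × Bool => okP p y ∧ p.2 = true) =
      (Finset.univ.filter (fun p : Fin k × Bool => p.2 = true)).erase
        (tF (h - 2 * ((nfW y).r : ZMod k) - 1), true) := by
    ext ⟨j, b⟩
    simp only [Finset.mem_filter, Finset.mem_univ, true_and, Finset.mem_erase, Prod.mk.injEq]
    cases b
    · simp
    · rw [okP_true_iff j y h t hL]
      simp [and_comm]
  rw [hset, Finset.card_erase_of_mem, card_true_letters]
  simp

lemma card_okP_neg (y : List (Fin k × Bool)) (hy : 1 ≤ y.length) (hg : Good y) :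
    (Finset.univ.filter (fun p : Fin k × Bool => okP p y ∧ p.2 = false)).card = k - 1 := by
  obtain ⟨h, t, hL⟩ := exists_head y hy hg
  have hset : Finset.univ.filter (fun p : Fin k × Bool => okP p y ∧ p.2 = false) =
      (Finset.univ.filter (fun p : Fin k × Bool => p.2 = false)).erase
        (tF (h - 2 * ((nfW y).r : ZMod k)), false) := by
    ext ⟨j, b⟩
    simp only [Finset.mem_filter, Finset.mem_univ, true_and, Finset.mem_erase, Prod.mk.injEq]
    cases b
    · rw [okP_false_iff j y h t hL]
      simp [and_comm]
    · simp
  rw [hset, Finset.card_erase_of_mem, card_false_letters]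
  simp


lemma card_words_zero_filter (P : List (Fin k × Bool) → Prop) [DecidablePred P]
    (hP : P []) : ((words k 0).filter P).card = 1 := by
  rw [words, Finset.filter_singleton, if_pos hP]
  rfl

lemma card_good_succ (n : ℕ) :
    ((words k (n+1)).filter Good).card = (2*k) * (2*k-2)^n := by
  induction n with
  | zero =>
    rw [card_filter_cons Good (fun p y => okP p y) (fun p y => good_cons p y) 0 (2*k)
      (fun y hlen _ => by
        have hy : y = [] := by simpa [List.length_eq_zero_iff] using hlen
        subst hy
        rw [Finset.filter_true_of_mem (fun p _ => okP_nil p)]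
        exact card_univ_letters),
      card_words_zero_filter Good good_nil]
    simp
  | succ n ih =>
    rw [card_filter_cons Good (fun p y => okP p y) (fun p y => good_cons p y) (n+1) (2*k-2)
      (fun y hlen hg => card_okP y (by omega) hg), ih]
    ring

lemma card_goodpos_succ (n : ℕ) :
    ((words k (n+1)).filter (fun y => Good y ∧ ∀ p ∈ y, p.2 = true)).card
      = k * (k-1)^n := by
  have hP : ∀ (p : Fin k × Bool) (y : List (Fin k × Bool)),
      (Good (p :: y) ∧ ∀ q ∈ p :: y, q.2 = true) ↔
      (Good y ∧ ∀ q ∈ y, q.2 = true) ∧ (okP p y ∧ p.2 = true) := by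
    intro p y
    rw [good_cons, List.forall_mem_cons]
    show (Good y ∧ okP p y) ∧ _ ↔ _
    tauto
  induction n with
  | zero =>
    rw [card_filter_cons _ _ hP 0 k
      (fun y hlen _ => by
        have hy : y = [] := by simpa [List.length_eq_zero_iff] using hlen
        subst hy
        have hfc : Finset.univ.filter (fun p : Fin k × Bool => okP p [] ∧ p.2 = true) =
            Finset.univ.filter (fun p : Fin k × Bool => p.2 = true) :=
          Finset.filter_congr (fun p _ => by simp [okP_nil p])
        rw [hfc]
        exact card_true_letters),
      card_words_zero_filter _ ⟨good_nil, by simp⟩]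
    simp
  | succ n ih =>
    rw [card_filter_cons _ _ hP (n+1) (k-1)
      (fun y hlen hg => card_okP_pos y (by omega) hg.1), ih]
    ring

lemma card_goodneg_succ (n : ℕ) :
    ((words k (n+1)).filter (fun y => Good y ∧ ∀ p ∈ y, p.2 = false)).card
      = k * (k-1)^n := by
  have hP : ∀ (p : Fin k × Bool) (y : List (Fin k × Bool)),
      (Good (p :: y) ∧ ∀ q ∈ p :: y, q.2 = false) ↔
      (Good y ∧ ∀ q ∈ y, q.2 = false) ∧ (okP p y ∧ p.2 = false) := by
    intro p y
    rw [good_cons, List.forall_mem_cons]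
    show (Good y ∧ okP p y) ∧ _ ↔ _
    tauto
  induction n with
  | zero =>
    rw [card_filter_cons _ _ hP 0 k
      (fun y hlen _ => by
        have hy : y = [] := by simpa [List.length_eq_zero_iff] using hlen
        subst hy
        have hfc : Finset.univ.filter (fun p : Fin k × Bool => okP p [] ∧ p.2 = false) =
            Finset.univ.filter (fun p : Fin k × Bool => p.2 = false) :=
          Finset.filter_congr (fun p _ => by simp [okP_nil p])
        rw [hfc]
        exact card_false_letters),
      card_words_zero_filter _ ⟨good_nil, by simp⟩]
    simp
  | succ n ih =>
    rw [card_filter_cons _ _ hP (n+1) (k-1)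
      (fun y hlen hg => card_okP_neg y (by omega) hg.1), ih]
    ring

lemma card_pos (n : ℕ) :
    ((words k n).filter (fun y => ∀ p ∈ y, p.2 = true)).card = k ^ n := by
  have hP : ∀ (p : Fin k × Bool) (y : List (Fin k × Bool)),
      (∀ q ∈ p :: y, q.2 = true) ↔ (∀ q ∈ y, q.2 = true) ∧ p.2 = true := by
    intro p y
    rw [List.forall_mem_cons]
    tauto
  induction n with
  | zero => rw [card_words_zero_filter _ (by simp)]; simp
  | succ n ih =>
    rw [card_filter_cons _ _ hP n k (fun y _ _ => card_true_letters), ih]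
    ring

lemma card_neg (n : ℕ) :
    ((words k n).filter (fun y => ∀ p ∈ y, p.2 = false)).card = k ^ n := by
  have hP : ∀ (p : Fin k × Bool) (y : List (Fin k × Bool)),
      (∀ q ∈ p :: y, q.2 = false) ↔ (∀ q ∈ y, q.2 = false) ∧ p.2 = false := by
    intro p y
    rw [List.forall_mem_cons]
    tauto
  induction n with
  | zero => rw [card_words_zero_filter _ (by simp)]; simp
  | succ n ih =>
    rw [card_filter_cons _ _ hP n k (fun y _ _ => card_false_letters), ih]
    ring


/-- The decidable version of the geodesic condition. -/
def GeoD (y : List (Fin k × Bool)) : Prop :=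
  Good y ∨ (∀ p ∈ y, p.2 = true) ∨ (∀ p ∈ y, p.2 = false)

instance : DecidablePred (GeoD (k := k)) := fun y => by unfold GeoD; infer_instance

lemma natCard_geo (n : ℕ) :
    Nat.card {y : List (Fin k × Bool) // y.length = n ∧ IsGeodesicWord y}
      = ((words k n).filter GeoD).card := by
  have hiff : ∀ y : List (Fin k × Bool),
      (y.length = n ∧ IsGeodesicWord y) ↔ y ∈ (words k n).filter GeoD := by
    intro y
    rw [Finset.mem_filter, mem_words, isGeodesic_iff, GeoD]
  rw [Nat.card_congr (Equiv.subtypeEquivRight hiff), Nat.card_eq_fintype_card]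
  exact Fintype.card_coe _

lemma card_geo_succ (n : ℕ) :
    ((words k (n+1)).filter GeoD).card + 2*k*(k-1)^n
      = 2*k*(2*k-2)^n + 2 * k^(n+1) := by
  classical
  set W := words k (n+1)
  have hdisj : ∀ s t : Finset (List (Fin k × Bool)),
      (∀ y ∈ s, y ∈ W ∧ ∀ p ∈ y, p.2 = true) → (∀ y ∈ t, y ∈ W ∧ ∀ p ∈ y, p.2 = false) →
      Disjoint s t := by
    intro s t hs ht
    rw [Finset.disjoint_left]
    intro y hys hyt
    obtain ⟨hyW, hpos⟩ := hs y hys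
    obtain ⟨_, hneg⟩ := ht y hyt
    have hlen : y.length = n + 1 := (mem_words _ _).mp hyW
    match y with
    | p :: z =>
      have h1 := hpos p (by simp)
      have h2 := hneg p (by simp)
      rw [h1] at h2
      simp at h2
  have hsplit : W.filter GeoD = W.filter Good ∪
      (W.filter (fun y => ∀ p ∈ y, p.2 = true) ∪ W.filter (fun y => ∀ p ∈ y, p.2 = false)) := by
    unfold W
    rw [← Finset.filter_or, ← Finset.filter_or]
    rfl
  have hinter : W.filter Good ∩
      (W.filter (fun y => ∀ p ∈ y, p.2 = true) ∪ W.filter (fun y => ∀ p ∈ y, p.2 = false)) =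
      W.filter (fun y => Good y ∧ ∀ p ∈ y, p.2 = true) ∪
      W.filter (fun y => Good y ∧ ∀ p ∈ y, p.2 = false) := by
    rw [Finset.inter_union_distrib_left, ← Finset.filter_and, ← Finset.filter_and]
  have hcard1 := Finset.card_union_add_card_inter (W.filter Good)
      (W.filter (fun y => ∀ p ∈ y, p.2 = true) ∪ W.filter (fun y => ∀ p ∈ y, p.2 = false))
  rw [hinter] at hcard1
  have hcard2 : (W.filter (fun y => ∀ p ∈ y, p.2 = true) ∪
      W.filter (fun y => ∀ p ∈ y, p.2 = false)).card = 2 * k^(n+1) := by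
    rw [Finset.card_union_of_disjoint (hdisj _ _
        (fun y hy => ⟨Finset.mem_filter.mp hy |>.1, Finset.mem_filter.mp hy |>.2⟩)
        (fun y hy => ⟨Finset.mem_filter.mp hy |>.1, Finset.mem_filter.mp hy |>.2⟩))]
    unfold W
    rw [card_pos, card_neg]
    ring
  have hcard3 : (W.filter (fun y => Good y ∧ ∀ p ∈ y, p.2 = true) ∪
      W.filter (fun y => Good y ∧ ∀ p ∈ y, p.2 = false)).card = 2 * (k * (k-1)^n) := by
    rw [Finset.card_union_of_disjoint (hdisj _ _
        (fun y hy => ⟨Finset.mem_filter.mp hy |>.1, (Finset.mem_filter.mp hy |>.2).2⟩)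
        (fun y hy => ⟨Finset.mem_filter.mp hy |>.1, (Finset.mem_filter.mp hy |>.2).2⟩))]
    unfold W
    rw [card_goodpos_succ, card_goodneg_succ]
    ring
  rw [hsplit]
  have hgood : (W.filter Good).card = 2*k*(2*k-2)^n := card_good_succ n
  have e : 2*k*(k-1)^n = 2*(k*(k-1)^n) := by ring
  rw [e]
  omega

end DualGeo

open PowerSeries in
theorem dual_geodesic_growth_series (k : ℕ) [NeZero k] (hk : 3 ≤ k)
    (a : ℕ → ℕ)
    (ha : ∀ n, a n = Nat.card {y : List (Fin k × Bool) // y.length = n ∧ IsGeodesicWord y}) :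
    (∀ n, 1 ≤ n →
      (a n : ℤ) = 2 * k ^ n + 2 * k * (2 * k - 2) ^ (n - 1) - 2 * k * (k - 1) ^ (n - 1)) ∧
    (1 - C (R := ℤ) k * X) * (1 - C (R := ℤ) (2 * (k - 1)) * X) * (1 - C (R := ℤ) (k - 1) * X) *
        PowerSeries.mk (fun n => (a n : ℤ)) =
      1 + C (R := ℤ) (3 - 2 * k) * X + C (R := ℤ) (2 + k ^ 2 - 3 * k) * X ^ 2 -
        C (R := ℤ) (2 * k * (k - 1)) * X ^ 3 := by
  have part1 : ∀ n, 1 ≤ n →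
      (a n : ℤ) = 2 * k ^ n + 2 * k * (2 * k - 2) ^ (n - 1) - 2 * k * (k - 1) ^ (n - 1) := by
    intro n hn
    obtain ⟨m, rfl⟩ : ∃ m, n = m + 1 := ⟨n - 1, by omega⟩
    rw [ha, DualGeo.natCard_geo]
    have hc := DualGeo.card_geo_succ (k := k) m
    have h1k : (1 : ℕ) ≤ k := by omega
    have h2k : (2 : ℕ) ≤ 2 * k := by omega
    zify [h1k, h2k] at hc
    simp only [Nat.add_sub_cancel]
    push_cast
    push_cast at hc
    linarith
  refine ⟨part1, ?_⟩
  have ha0 : (a 0 : ℤ) = 1 := by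
    rw [ha, DualGeo.natCard_geo,
      DualGeo.card_words_zero_filter _ (Or.inl DualGeo.good_nil)]
    norm_num
  have h1 : (a 1 : ℤ) = 2 * k := by rw [part1 1 (by norm_num)]; norm_num
  have h2 : (a 2 : ℤ) = 2 * (k:ℤ)^2 + 2 * k * (2 * k - 2) - 2 * k * (k - 1) := by
    rw [part1 2 (by norm_num)]; norm_num
  have h3 : (a 3 : ℤ) = 2 * (k:ℤ)^3 + 2 * k * (2 * k - 2)^2 - 2 * k * (k - 1)^2 := by
    rw [part1 3 (by norm_num)]
  set α : ℤ := (k : ℤ) with hα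
  set β : ℤ := 2 * ((k : ℤ) - 1) with hβ
  set γ : ℤ := (k : ℤ) - 1 with hγ
  have hQ : (1 - C (R := ℤ) α * X) * (1 - C (R := ℤ) β * X) * (1 - C (R := ℤ) γ * X)
        * PowerSeries.mk (fun n => (a n : ℤ))
      = PowerSeries.mk (fun n => (a n : ℤ))
        - C (R := ℤ) (α + β + γ) * (PowerSeries.mk (fun n => (a n : ℤ)) * X ^ 1)
        + C (R := ℤ) (α * β + α * γ + β * γ) * (PowerSeries.mk (fun n => (a n : ℤ)) * X ^ 2)
        - C (R := ℤ) (α * β * γ) * (PowerSeries.mk (fun n => (a n : ℤ)) * X ^ 3) := by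
    simp only [map_add, map_mul]
    ring
  rw [hQ]
  ext n
  simp only [LinearMap.map_add, LinearMap.map_sub, PowerSeries.coeff_C_mul,
    PowerSeries.coeff_mul_X_pow', PowerSeries.coeff_mk, PowerSeries.coeff_one,
    PowerSeries.coeff_X, PowerSeries.coeff_X_pow, PowerSeries.coeff_C]
  rcases n with _ | _ | _ | _ | n
  · norm_num [ha0]
  · norm_num [h1, ha0]
    ring
  · norm_num [h2, h1, ha0]
    ring
  · norm_num [h3, h2, h1, ha0]
    ring
  · have e4 : (a (n + 4) : ℤ) = 2 * α ^ (n+4) + 2 * α * (2 * α - 2) ^ (n+3) - 2 * α * (α - 1) ^ (n+3) := by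
      rw [part1 (n+4) (by omega)]; norm_num; exact Or.inl rfl
    have e3 : (a (n + 3) : ℤ) = 2 * α ^ (n+3) + 2 * α * (2 * α - 2) ^ (n+2) - 2 * α * (α - 1) ^ (n+2) := by
      rw [part1 (n+3) (by omega)]; norm_num; exact Or.inl rfl
    have e2 : (a (n + 2) : ℤ) = 2 * α ^ (n+2) + 2 * α * (2 * α - 2) ^ (n+1) - 2 * α * (α - 1) ^ (n+1) := by
      rw [part1 (n+2) (by omega)]; norm_num; exact Or.inl rfl
    have e1 : (a (n + 1) : ℤ) = 2 * α ^ (n+1) + 2 * α * (2 * α - 2) ^ n - 2 * α * (α - 1) ^ n := by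
      rw [part1 (n+1) (by omega)]; norm_num; exact Or.inl rfl
    have hn4 : n + 1 + 1 + 1 + 1 = n + 4 := by omega
    rw [hn4]
    simp only [if_pos (by omega : 1 ≤ n + 4), if_pos (by omega : 2 ≤ n + 4),
      if_pos (by omega : 3 ≤ n + 4),
      if_neg (by omega : ¬ (n + 4 = 0)), if_neg (by omega : ¬ (n + 4 = 1)),
      if_neg (by omega : ¬ (n + 4 = 2)), if_neg (by omega : ¬ (n + 4 = 3)),
      if_neg (by omega : ¬ (n + 4 - 1 = 0)), if_neg (by omega : ¬ (n + 4 - 2 = 0)),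
      if_neg (by omega : ¬ (n + 4 - 3 = 0))]
    have c1 : n + 4 - 1 = n + 3 := by omega
    have c2 : n + 4 - 2 = n + 2 := by omega
    have c3 : n + 4 - 3 = n + 1 := by omega
    rw [c1, c2, c3, e4, e3, e2, e1]
    ring
end
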